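/- arXiv:1405.7633 — 13 statements merged into one kernel-verified Lean document; each statement's English description precedes it below -/
import Mathlib

section
/- Let G : ℝ → ℝ be measurable and let α > 0. Assume that the function t ↦ |G(t)|/(e^{αt} − 1) is integrable on (0, ∞). Then the series of Laplace transforms ∑'_{k=1}^∞ ∫₀^∞ e^{−αkt} G(t) dt converges and equals ∫₀^∞ G(t)/(e^{αt} − 1) dt. -/
open MeasureTheory Real Set

private lemma key_hasSum (α t : ℝ) (hα : 0 < α) (ht : 0 < t) :
    HasSum (fun k : ℕ => Real.exp (-(α * (k + 1) * t))) (1 / (Real.exp (α * t) - 1)) := by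
  set r := Real.exp (-(α * t)) with hr
  have hr0 : 0 < r := Real.exp_pos _
  have hr1 : r < 1 := by
    rw [hr, Real.exp_lt_one_iff]
    nlinarith
  have hgeo : HasSum (fun k : ℕ => r * r ^ k) (r * (1 - r)⁻¹) :=
    (hasSum_geometric_of_lt_one hr0.le hr1).mul_left r
  have heq : ∀ k : ℕ, Real.exp (-(α * (k + 1) * t)) = r * r ^ k := by
    intro k
    rw [hr, ← Real.exp_nat_mul, ← Real.exp_add]
    ring_nf
  have hval : r * (1 - r)⁻¹ = 1 / (Real.exp (α * t) - 1) := by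
    have he : Real.exp (α * t) ≠ 0 := (Real.exp_pos _).ne'
    have h1 : 1 < Real.exp (α * t) := by
      exact Real.one_lt_exp_iff.mpr (mul_pos hα ht)
    rw [hr, Real.exp_neg]
    field_simp
  rw [← hval]
  exact hgeo.congr_fun fun k => heq k

/-- The simple form: if `t ↦ |G t| / (e^{αt} - 1)` is integrable on `(0, ∞)`,
then the series of Laplace transforms `∑_{k≥1} ∫₀^∞ e^{-αkt} G(t) dt` converges
to `∫₀^∞ G(t)/(e^{αt} - 1) dt`. -/
theorem series_eq_integral_simple (G : ℝ → ℝ) (hG : Measurable G) (α : ℝ) (hα : 0 < α)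
    (hint : IntegrableOn (fun t => |G t| / (Real.exp (α * t) - 1)) (Ioi 0)) :
    HasSum (fun k : ℕ => ∫ t in Ioi 0, Real.exp (-(α * (k + 1) * t)) * G t)
      (∫ t in Ioi 0, G t / (Real.exp (α * t) - 1)) := by
  set μ := volume.restrict (Ioi (0:ℝ)) with hμ
  set F : ℕ → ℝ → ℝ := fun k t => Real.exp (-(α * (k + 1) * t)) * G t with hF
  have hFmeas : ∀ k, Measurable (F k) := fun k =>
    ((measurable_const.mul measurable_id).neg.exp).mul hG
  -- pointwise bound for each single term (and for partial sums)
  have hbound : ∀ᵐ t ∂μ, ∀ n : ℕ,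
      ∑ k ∈ Finset.range n, ‖F k t‖ ≤ |G t| / (Real.exp (α * t) - 1) := by
    rw [hμ, ae_restrict_iff' measurableSet_Ioi]
    filter_upwards with t ht n
    have hsum := key_hasSum α t hα ht
    have hpos : 0 < Real.exp (α * t) - 1 := by
      have : 1 < Real.exp (α * t) := by exact Real.one_lt_exp_iff.mpr (mul_pos hα ht)
      linarith
    have hle : ∑ k ∈ Finset.range n, Real.exp (-(α * (k + 1) * t))
        ≤ 1 / (Real.exp (α * t) - 1) :=
      sum_le_hasSum _ (fun k _ => (Real.exp_pos _).le) hsum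
    calc ∑ k ∈ Finset.range n, ‖F k t‖
        = (∑ k ∈ Finset.range n, Real.exp (-(α * (k + 1) * t))) * |G t| := by
          rw [Finset.sum_mul]
          refine Finset.sum_congr rfl fun k _ => ?_
          rw [hF]
          simp [abs_mul, abs_of_pos (Real.exp_pos _)]
      _ ≤ (1 / (Real.exp (α * t) - 1)) * |G t| := by
          apply mul_le_mul_of_nonneg_right hle (abs_nonneg _)
      _ = |G t| / (Real.exp (α * t) - 1) := by ring
  have hHnonneg : ∀ᵐ t ∂μ, 0 ≤ |G t| / (Real.exp (α * t) - 1) := by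
    rw [hμ, ae_restrict_iff' measurableSet_Ioi]
    filter_upwards with t ht
    have hpos : 0 < Real.exp (α * t) - 1 := by
      have : 1 < Real.exp (α * t) := by exact Real.one_lt_exp_iff.mpr (mul_pos hα ht)
      linarith
    positivity
  -- integrability of each F k
  have hFint : ∀ k, Integrable (F k) μ := by
    intro k
    refine hint.mono' (hFmeas k).aestronglyMeasurable ?_
    filter_upwards [hbound] with t ht
    calc ‖F k t‖ ≤ ∑ j ∈ Finset.range (k+1), ‖F j t‖ :=
          Finset.single_le_sum (f := fun j => ‖F j t‖)
            (fun j _ => norm_nonneg _) (Finset.self_mem_range_succ k)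
      _ ≤ |G t| / (Real.exp (α * t) - 1) := ht (k+1)
  -- summability of the integrals of norms
  have hsummable : Summable fun k => ∫ t, ‖F k t‖ ∂μ := by
    apply summable_of_sum_range_le (c := ∫ t, |G t| / (Real.exp (α * t) - 1) ∂μ)
      (fun k => integral_nonneg fun t => norm_nonneg _)
    intro n
    rw [← integral_finset_sum]
    · refine integral_mono_ae (integrable_finset_sum _ fun k _ => (hFint k).norm) hint ?_
      filter_upwards [hbound] with t ht using ht n
    · exact fun k _ => (hFint k).norm
  have main := hasSum_integral_of_summable_integral_norm hFint hsummable
  -- identify the tsum with the target integrand a.e.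
  have hae : ∀ᵐ t ∂μ, (∑' k : ℕ, F k t) = G t / (Real.exp (α * t) - 1) := by
    rw [hμ, ae_restrict_iff' measurableSet_Ioi]
    filter_upwards with t ht
    have hsum := (key_hasSum α t hα ht).mul_right (G t)
    rw [hF]
    rw [hsum.tsum_eq]
    ring
  rwa [integral_congr_ae hae] at main
end

section
/- Let G : ℝ → ℝ be measurable and let α > 0. Assume that the function t ↦ |G(t)|/(e^{αt} − 1) is integrable on (0, ∞). Then ∫₀^∞ e^{−αx} (∑'_{k=1}^∞ G(x/k)/k) dx = ∑'_{k=1}^∞ ∫₀^∞ e^{−αkt} G(t) dt; that is, the Laplace transform at α of the function F(x) = ∑'_{k=1}^∞ G(x/k)/k equals ∑'_{k=1}^∞ g(αk). -/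
open MeasureTheory Real Set

/-- The Laplace transform at `α` of `F(x) = ∑_{k≥1} G(x/k)/k` equals
`∑_{k≥1} g(αk)` where `g` is the Laplace transform of `G`. -/
theorem laplace_of_dilated_sum (G : ℝ → ℝ) (hG : Measurable G) (α : ℝ) (hα : 0 < α)
    (hint : IntegrableOn (fun t => |G t| / (Real.exp (α * t) - 1)) (Ioi 0)) :
    ∫ x in Ioi 0, Real.exp (-(α * x)) * (∑' k : ℕ, G (x / (k + 1)) / (k + 1))
      = ∑' k : ℕ, ∫ t in Ioi 0, Real.exp (-(α * (k + 1) * t)) * G t := by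
  have hc : ∀ k : ℕ, (0:ℝ) < (k:ℝ) + 1 := fun k => by positivity
  -- the transformed functions
  set f : ℕ → ℝ → ℝ := fun k x =>
    Real.exp (-(α * x)) * (G (x / ((k:ℝ) + 1)) / ((k:ℝ) + 1)) with hf
  set H : ℕ → ℝ → ℝ := fun k t => Real.exp (-(α * ((k:ℝ) + 1) * t)) * G t with hH
  have hmeasH : ∀ k, Measurable (H k) := by
    intro k; apply Measurable.mul _ hG
    exact (measurable_id.const_mul _).neg.exp
  have hmeasf : ∀ k, Measurable (f k) := by
    intro k
    apply Measurable.mul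
    · exact (measurable_id.const_mul _).neg.exp
    · exact (hG.comp (measurable_id.div_const _)).div_const _
  -- pointwise domination of H k by the integrable function
  have hbound : ∀ k : ℕ, ∀ t ∈ Ioi (0:ℝ), |H k t| ≤ |G t| / (Real.exp (α * t) - 1) := by
    intro k t ht
    have ht' : 0 < t := ht
    have h1 : 1 < Real.exp (α * t) := by
      have := Real.exp_lt_exp.mpr (show (0:ℝ) < α * t by positivity)
      simpa using this
    have h1' : 0 < Real.exp (α * t) - 1 := by linarith
    have hle : Real.exp (-(α * ((k:ℝ) + 1) * t)) ≤ (Real.exp (α * t) - 1)⁻¹ := by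
      have e1 : Real.exp (-(α * ((k:ℝ) + 1) * t)) ≤ Real.exp (-(α * t)) := by
        apply Real.exp_le_exp.mpr
        have hk0 : (0:ℝ) ≤ (k:ℝ) := Nat.cast_nonneg k
        nlinarith [mul_nonneg (mul_nonneg hα.le hk0) ht'.le]
      have e2 : Real.exp (-(α * t)) ≤ (Real.exp (α * t) - 1)⁻¹ := by
        rw [Real.exp_neg]
        apply inv_anti₀ h1'
        linarith
      linarith
    calc |H k t| = Real.exp (-(α * ((k:ℝ) + 1) * t)) * |G t| := by
          rw [hH]; rw [abs_mul, Real.abs_exp]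
      _ ≤ (Real.exp (α * t) - 1)⁻¹ * |G t| :=
          mul_le_mul_of_nonneg_right hle (abs_nonneg _)
      _ = |G t| / (Real.exp (α * t) - 1) := by rw [div_eq_mul_inv, mul_comm]
  -- integrability of H k
  have hHint : ∀ k, IntegrableOn (H k) (Ioi 0) := by
    intro k
    apply MeasureTheory.Integrable.mono hint ((hmeasH k).aestronglyMeasurable.restrict)
    filter_upwards [ae_restrict_mem measurableSet_Ioi] with t ht
    rw [Real.norm_eq_abs, Real.norm_eq_abs]
    exact (hbound k t ht).trans (le_abs_self _)
  -- change of variables: ∫ f k = ∫ H k and same for abs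
  have hcv : ∀ (k : ℕ) (φ : ℝ → ℝ),
      (∫ t in Ioi (0:ℝ), φ (((k:ℝ) + 1) * t)) = ((k:ℝ) + 1)⁻¹ * ∫ x in Ioi (0:ℝ), φ x := by
    intro k φ
    have := integral_comp_mul_left_Ioi φ 0 (hc k)
    simpa [mul_zero, smul_eq_mul] using this
  have hfk_comp : ∀ (k : ℕ) (t : ℝ), f k (((k:ℝ) + 1) * t) = H k t / ((k:ℝ) + 1) := by
    intro k t
    rw [hf, hH]
    simp only
    rw [mul_div_cancel_left₀ _ (hc k).ne']
    ring_nf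
  have hEq : ∀ k, ∫ x in Ioi (0:ℝ), f k x = ∫ t in Ioi (0:ℝ), H k t := by
    intro k
    have h1 := hcv k (f k)
    have h2 : (∫ t in Ioi (0:ℝ), f k (((k:ℝ) + 1) * t))
        = ∫ t in Ioi (0:ℝ), H k t / ((k:ℝ) + 1) := by
      exact integral_congr_ae (Filter.Eventually.of_forall fun t => hfk_comp k t)
    rw [h2, integral_div] at h1
    field_simp at h1
    linarith [h1]
  have hEqAbs : ∀ k, ∫ x in Ioi (0:ℝ), |f k x| = ∫ t in Ioi (0:ℝ), |H k t| := by
    intro k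
    have h1 := hcv k (fun x => |f k x|)
    have h2 : (∫ t in Ioi (0:ℝ), |f k (((k:ℝ) + 1) * t)|)
        = ∫ t in Ioi (0:ℝ), |H k t| / ((k:ℝ) + 1) := by
      refine integral_congr_ae (Filter.Eventually.of_forall fun t => ?_)
      show |f k (((k:ℝ) + 1) * t)| = |H k t| / ((k:ℝ) + 1)
      rw [hfk_comp k t, abs_div, abs_of_pos (hc k)]
    rw [h2, integral_div] at h1
    field_simp at h1
    linarith [h1]
  -- integrability of f k
  have hfint : ∀ k, IntegrableOn (f k) (Ioi 0) := by
    intro k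
    have := (integrableOn_Ioi_comp_mul_left_iff (f k) 0 (hc k))
    rw [mul_zero] at this
    rw [← this]
    have : (fun x => f k (((k:ℝ) + 1) * x)) = fun x => H k x / ((k:ℝ) + 1) :=
      funext fun t => hfk_comp k t
    rw [this]
    exact (hHint k).div_const _
  -- the key lintegral bound
  have hlin : (∑' k : ℕ, ∫⁻ x in Ioi (0:ℝ), ‖f k x‖₊) ≠ ⊤ := by
    have step1 : ∀ k : ℕ, (∫⁻ x in Ioi (0:ℝ), ‖f k x‖₊)
        = ∫⁻ t in Ioi (0:ℝ), ENNReal.ofReal (|H k t|) := by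
      intro k
      simp_rw [← enorm_eq_nnnorm]
      rw [← ofReal_integral_norm_eq_lintegral_enorm (hfint k)]
      simp_rw [Real.norm_eq_abs]
      rw [hEqAbs k]
      rw [ofReal_integral_eq_lintegral_ofReal ((hHint k).abs)
        (Filter.Eventually.of_forall fun t => abs_nonneg _)]
    simp_rw [step1]
    rw [← MeasureTheory.lintegral_tsum (fun k =>
      ((hmeasH k).abs.ennreal_ofReal).aemeasurable)]
    have key : ∀ t ∈ Ioi (0:ℝ), (∑' k : ℕ, ENNReal.ofReal (|H k t|))
        = ENNReal.ofReal (|G t| / (Real.exp (α * t) - 1)) := by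
      intro t ht
      have ht' : (0:ℝ) < t := ht
      set r : ℝ := Real.exp (-(α * t)) with hr
      have hr0 : 0 ≤ r := Real.exp_nonneg _
      have hr1 : r < 1 := by
        rw [hr, Real.exp_lt_one_iff]
        have : (0:ℝ) < α * t := by positivity
        linarith
      have habs : ∀ k : ℕ, |H k t| = (|G t| * r) * r ^ k := by
        intro k
        rw [hH]
        simp only
        rw [abs_mul, Real.abs_exp]
        have : -(α * ((k:ℝ) + 1) * t) = ((k:ℝ) + 1) * (-(α * t)) := by ring
        rw [this]
        rw [← Real.rpow_natCast (Real.exp (-(α * t))) k]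
        rw [show ((k:ℝ) + 1) * (-(α * t)) = (k:ℝ) * (-(α * t)) + (-(α * t)) by ring]
        rw [Real.exp_add, ← Real.exp_mul]
        rw [hr]; ring
      have hsum : Summable (fun k : ℕ => (|G t| * r) * r ^ k) :=
        (summable_geometric_of_lt_one hr0 hr1).mul_left _
      calc (∑' k : ℕ, ENNReal.ofReal (|H k t|))
          = ∑' k : ℕ, ENNReal.ofReal ((|G t| * r) * r ^ k) := by
            congr 1; funext k; rw [habs k]
        _ = ENNReal.ofReal (∑' k : ℕ, (|G t| * r) * r ^ k) := by
            rw [ENNReal.ofReal_tsum_of_nonneg (fun k => by positivity) hsum]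
        _ = ENNReal.ofReal (|G t| / (Real.exp (α * t) - 1)) := by
            congr 1
            rw [tsum_mul_left, tsum_geometric_of_lt_one hr0 hr1]
            have h1 : 1 < Real.exp (α * t) := by
              have := Real.exp_lt_exp.mpr (show (0:ℝ) < α * t by positivity)
              simpa using this
            have hE : Real.exp (α * t) ≠ 0 := (Real.exp_pos _).ne'
            have hE1 : Real.exp (α * t) - 1 ≠ 0 := by linarith
            have h1r : 1 - r ≠ 0 := by linarith
            rw [hr, Real.exp_neg]
            field_simp
    rw [setLIntegral_congr_fun measurableSet_Ioi
      key]
    have : (∫⁻ t in Ioi (0:ℝ), ENNReal.ofReal (|G t| / (Real.exp (α * t) - 1)))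
        ≤ ∫⁻ t in Ioi (0:ℝ), ‖|G t| / (Real.exp (α * t) - 1)‖₊ := by
      apply lintegral_mono
      intro t
      dsimp only
      rw [← enorm_eq_nnnorm, Real.enorm_eq_ofReal_abs]
      exact ENNReal.ofReal_le_ofReal (le_abs_self _)
    exact (lt_of_le_of_lt this hint.2).ne
  -- main interchange
  have main : (∫ x in Ioi (0:ℝ), ∑' k : ℕ, f k x) = ∑' k : ℕ, ∫ x in Ioi (0:ℝ), f k x :=
    integral_tsum (fun k => (hmeasf k).aestronglyMeasurable) hlin
  calc ∫ x in Ioi (0:ℝ), Real.exp (-(α * x)) * (∑' k : ℕ, G (x / ((k:ℝ) + 1)) / ((k:ℝ) + 1))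
      = ∫ x in Ioi (0:ℝ), ∑' k : ℕ, f k x := by
        refine integral_congr_ae (Filter.Eventually.of_forall fun x => ?_)
        rw [hf]
        exact (tsum_mul_left).symm
    _ = ∑' k : ℕ, ∫ x in Ioi (0:ℝ), f k x := main
    _ = ∑' k : ℕ, ∫ t in Ioi (0:ℝ), H k t := by
        congr 1; funext k; exact hEq k
    _ = ∑' k : ℕ, ∫ t in Ioi (0:ℝ), Real.exp (-(α * ((k:ℝ) + 1) * t)) * G t := rfl
end

section
/- Let G : ℝ → ℝ be measurable and let α > 0. Assume that the function t ↦ |G(t)|/(e^{αt} − 1) is integrable on (0, ∞). Then the alternating series ∑'_{k=1}^∞ (−1)^{k+1} ∫₀^∞ e^{−αkt} G(t) dt converges and equals ∫₀^∞ G(t)/(e^{αt} + 1) dt. -/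
open MeasureTheory Real Set

/-- Alternating series: `∑_{k≥1} (-1)^{k+1} ∫₀^∞ e^{-αkt} G(t) dt`
converges to `∫₀^∞ G(t)/(e^{αt} + 1) dt`. -/
theorem alternating_series_eq_integral (G : ℝ → ℝ) (hG : Measurable G) (α : ℝ) (hα : 0 < α)
    (hint : IntegrableOn (fun t => |G t| / (Real.exp (α * t) - 1)) (Ioi 0)) :
    HasSum (fun k : ℕ => (-1 : ℝ) ^ k * ∫ t in Ioi 0, Real.exp (-(α * (k + 1) * t)) * G t)
      (∫ t in Ioi 0, G t / (Real.exp (α * t) + 1)) := by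
  set μ := volume.restrict (Ioi (0:ℝ)) with hμ
  set F : ℕ → ℝ → ℝ := fun k t => (-1 : ℝ) ^ k * (Real.exp (-(α * (k + 1) * t)) * G t) with hF
  set r : ℝ → ℝ := fun t => Real.exp (-(α * t)) with hrdef
  have hmeas : ∀ k, AEStronglyMeasurable (F k) μ := fun k =>
    (measurable_const.mul ((((measurable_const.mul measurable_id').neg).exp).mul
      hG)).aestronglyMeasurable
  -- pointwise norm formula
  have hnorm : ∀ (k : ℕ) (t : ℝ), ‖F k t‖ = r t ^ (k + 1) * |G t| := by
    intro k t
    have h1 : Real.exp (-(α * (k + 1) * t)) = r t ^ (k + 1) := by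
      rw [hrdef, ← Real.exp_nat_mul]; congr 1; push_cast; ring
    rw [hF]
    rw [Real.norm_eq_abs, abs_mul, abs_mul, abs_pow, abs_neg, abs_one, one_pow, one_mul,
      abs_of_pos (Real.exp_pos _), h1]
  have hr0 : ∀ t : ℝ, 0 < r t := fun t => Real.exp_pos _
  have hr1 : ∀ t ∈ Ioi (0:ℝ), r t < 1 := by
    intro t ht
    have : 0 < α * t := mul_pos hα ht
    exact Real.exp_lt_one_iff.mpr (by linarith)
  have hE1 : ∀ t ∈ Ioi (0:ℝ), 0 < Real.exp (α * t) - 1 := by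
    intro t ht
    have : (1:ℝ) < Real.exp (α * t) := by
      rw [Real.one_lt_exp_iff]; exact mul_pos hα ht
    linarith
  have hprod : ∀ t : ℝ, Real.exp (α * t) * r t = 1 := by
    intro t; rw [hrdef, ← Real.exp_add]; simp
  -- r/(1-r) = 1/(exp(αt)-1)
  have hfrac : ∀ t ∈ Ioi (0:ℝ), r t / (1 - r t) = 1 / (Real.exp (α * t) - 1) := by
    intro t ht
    rw [div_eq_div_iff (by nlinarith [hr1 t ht]) (hE1 t ht).ne']
    linear_combination hprod t
  -- integrability of each F k
  have hbound_nonneg : ∀ t ∈ Ioi (0:ℝ), 0 ≤ |G t| / (Real.exp (α * t) - 1) := fun t ht =>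
    div_nonneg (abs_nonneg _) (hE1 t ht).le
  have h_int : ∀ k, Integrable (F k) μ := by
    intro k
    refine hint.mono' (hmeas k) ((ae_restrict_iff' measurableSet_Ioi).mpr
      (ae_of_all _ fun t ht => ?_))
    rw [hnorm k t]
    have h1 : r t ^ (k + 1) ≤ r t := by
      calc r t ^ (k + 1) ≤ r t ^ 1 :=
        pow_le_pow_of_le_one (hr0 t).le (hr1 t ht).le (by omega)
      _ = r t := pow_one _
    have h2 : r t ≤ 1 / (Real.exp (α * t) - 1) := by
      rw [le_div_iff₀ (hE1 t ht)]
      nlinarith [hprod t, (hr0 t).le]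
    calc r t ^ (k + 1) * |G t| ≤ (1 / (Real.exp (α * t) - 1)) * |G t| :=
          mul_le_mul_of_nonneg_right (h1.trans h2) (abs_nonneg _)
      _ = |G t| / (Real.exp (α * t) - 1) := by ring
  -- summability of integrals of norms
  have h_sum : Summable fun k => ∫ t, ‖F k t‖ ∂μ := by
    refine summable_of_sum_range_le (c := ∫ t, |G t| / (Real.exp (α * t) - 1) ∂μ)
      (fun k => integral_nonneg fun t => norm_nonneg _) fun n => ?_
    rw [← integral_finset_sum _ fun k _ => (h_int k).norm]
    refine integral_mono_ae (integrable_finset_sum _ fun k _ => (h_int k).norm) hint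
      ((ae_restrict_iff' measurableSet_Ioi).mpr (ae_of_all _ fun t ht => ?_))
    simp only [hnorm]
    rw [← Finset.sum_mul]
    have hs : ∑ k ∈ Finset.range n, r t ^ (k + 1) ≤ 1 / (Real.exp (α * t) - 1) := by
      have hsummable : Summable fun k : ℕ => r t * r t ^ k :=
        (summable_geometric_of_lt_one (hr0 t).le (hr1 t ht)).mul_left _
      calc ∑ k ∈ Finset.range n, r t ^ (k + 1)
          = ∑ k ∈ Finset.range n, r t * r t ^ k := by
            refine Finset.sum_congr rfl fun k _ => ?_; ring
        _ ≤ ∑' k : ℕ, r t * r t ^ k :=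
            Summable.sum_le_tsum _ (fun k _ => by positivity) hsummable
        _ = r t * (1 - r t)⁻¹ := by
            rw [tsum_mul_left, tsum_geometric_of_lt_one (hr0 t).le (hr1 t ht)]
        _ = r t / (1 - r t) := by ring
        _ = 1 / (Real.exp (α * t) - 1) := hfrac t ht
    calc (∑ k ∈ Finset.range n, r t ^ (k + 1)) * |G t|
        ≤ (1 / (Real.exp (α * t) - 1)) * |G t| :=
          mul_le_mul_of_nonneg_right hs (abs_nonneg _)
      _ = |G t| / (Real.exp (α * t) - 1) := by ring
  have hmain := MeasureTheory.hasSum_integral_of_summable_integral_norm h_int h_sum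
  -- identify the sum of the series pointwise
  have htsum : ∀ t ∈ Ioi (0:ℝ), ∑' k : ℕ, F k t = G t / (Real.exp (α * t) + 1) := by
    intro t ht
    have h1 : ∀ k : ℕ, F k t = (-(r t)) ^ k * (r t * G t) := by
      intro k
      have h2 : Real.exp (-(α * (k + 1) * t)) = r t ^ (k + 1) := by
        rw [hrdef, ← Real.exp_nat_mul]; congr 1; push_cast; ring
      rw [hF]
      simp only [h2, neg_pow (r t) k]
      ring
    have hnr : ‖-(r t)‖ < 1 := by
      rw [norm_neg, Real.norm_eq_abs, abs_of_pos (hr0 t)]; exact hr1 t ht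
    calc ∑' k : ℕ, F k t = (∑' k : ℕ, (-(r t)) ^ k) * (r t * G t) := by
          simp_rw [h1]; rw [tsum_mul_right]
      _ = (1 - -(r t))⁻¹ * (r t * G t) := by rw [tsum_geometric_of_norm_lt_one hnr]
      _ = G t / (Real.exp (α * t) + 1) := by
          rw [sub_neg_eq_add, inv_mul_eq_div, div_eq_div_iff (by nlinarith [hr0 t])
            (by nlinarith [hE1 t ht])]
          linear_combination G t * hprod t
  -- conclude
  have heq : (∫ t, (∑' k : ℕ, F k t) ∂μ) = ∫ t in Ioi 0, G t / (Real.exp (α * t) + 1) :=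
    setIntegral_congr_fun measurableSet_Ioi fun t ht => htsum t ht
  have hfun : (fun k : ℕ => ∫ t, F k t ∂μ)
      = fun k : ℕ => (-1 : ℝ) ^ k * ∫ t in Ioi 0, Real.exp (-(α * (k + 1) * t)) * G t := by
    funext k
    rw [hF]
    exact integral_const_mul _ _
  rw [← hfun, ← heq]
  exact hmain
end

section
/- Let G : ℝ → ℝ be integrable on (0, ∞), let α > 0 and let γ ∈ ℝ with |γ| > 1. Then the power-factor series ∑'_{k=1}^∞ γ^{−k} ∫₀^∞ e^{−αkt} G(t) dt converges and equals ∫₀^∞ G(t)/(γ e^{αt} − 1) dt. -/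
open MeasureTheory Real Set

/-- Power factor series: for `|γ| > 1`, `∑_{k≥1} γ^{-k} ∫₀^∞ e^{-αkt} G(t) dt`
converges to `∫₀^∞ G(t)/(γ e^{αt} - 1) dt`. -/
theorem power_factor_series_eq_integral (G : ℝ → ℝ) (hG : IntegrableOn G (Ioi 0))
    (α γ : ℝ) (hα : 0 < α) (hγ : 1 < |γ|) :
    HasSum (fun k : ℕ => γ ^ (-((k : ℤ) + 1)) * ∫ t in Ioi 0, Real.exp (-(α * (k + 1) * t)) * G t)
      (∫ t in Ioi 0, G t / (γ * Real.exp (α * t) - 1)) := by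
  have hγ0 : γ ≠ 0 := by
    intro h; rw [h, abs_zero] at hγ; linarith
  set μ := volume.restrict (Ioi (0:ℝ)) with hμ
  set F : ℕ → ℝ → ℝ := fun k t => γ ^ (-((k : ℤ) + 1)) * (Real.exp (-(α * (k + 1) * t)) * G t)
    with hF
  -- exp factor bounded by 1 on Ioi 0
  have hexp_le : ∀ k : ℕ, ∀ t ∈ Ioi (0:ℝ), Real.exp (-(α * (k + 1) * t)) ≤ 1 := by
    intro k t ht
    rw [Real.exp_le_one_iff]
    have ht' : (0:ℝ) < t := ht
    have : 0 < α * (k + 1) * t := by positivity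
    linarith
  have hmeas : ∀ k : ℕ, AEStronglyMeasurable (fun t => Real.exp (-(α * (k + 1) * t)) * G t) μ := by
    intro k
    exact ((Real.continuous_exp.comp (by continuity)).aestronglyMeasurable).mul
      hG.aestronglyMeasurable
  have hintE : ∀ k : ℕ, Integrable (fun t => Real.exp (-(α * (k + 1) * t)) * G t) μ := by
    intro k
    refine hG.norm.mono (hmeas k) ?_
    filter_upwards [ae_restrict_mem measurableSet_Ioi] with t ht
    have h1 := hexp_le k t ht
    have h0 : (0:ℝ) ≤ Real.exp (-(α * (k + 1) * t)) := (Real.exp_pos _).le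
    simp only [norm_mul, Real.norm_eq_abs, abs_abs, abs_of_nonneg h0]
    calc Real.exp (-(α * (k + 1) * t)) * |G t| ≤ 1 * |G t| := by
          exact mul_le_mul_of_nonneg_right h1 (abs_nonneg _)
      _ = |G t| := one_mul _
  have hint : ∀ k, Integrable (F k) μ := fun k => (hintE k).const_mul _
  have hnormle : ∀ k : ℕ, ∫ t, ‖F k t‖ ∂μ ≤ |γ|⁻¹ ^ (k + 1) * ∫ t, |G t| ∂μ := by
    intro k
    have h1 : ∀ t, ‖F k t‖ = |γ|⁻¹ ^ (k + 1) * ‖Real.exp (-(α * (k + 1) * t)) * G t‖ := by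
      intro t
      rw [hF]
      simp only [norm_mul, Real.norm_eq_abs]
      congr 1
      rw [show (-((k : ℤ) + 1)) = -((k + 1 : ℕ) : ℤ) by push_cast; ring,
        zpow_neg, zpow_natCast, abs_inv, abs_pow, inv_pow]
    simp only [h1]
    rw [integral_const_mul]
    apply mul_le_mul_of_nonneg_left ?_ (by positivity)
    apply integral_mono_ae (hintE k).norm hG.norm
    filter_upwards [ae_restrict_mem measurableSet_Ioi] with t ht
    have h1 := hexp_le k t ht
    have h0 : (0:ℝ) ≤ Real.exp (-(α * (k + 1) * t)) := (Real.exp_pos _).le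
    simp only [norm_mul, Real.norm_eq_abs, abs_of_nonneg h0]
    nlinarith [abs_nonneg (G t)]
  have hsum : Summable (fun k : ℕ => ∫ t, ‖F k t‖ ∂μ) := by
    have hr : |γ|⁻¹ < 1 := by
      rw [inv_lt_one_iff₀]; right; exact hγ
    have hgeo : Summable (fun k : ℕ => |γ|⁻¹ ^ (k + 1) * ∫ t, |G t| ∂μ) := by
      apply Summable.mul_right
      exact (summable_geometric_of_lt_one (by positivity) hr).comp_injective
        (add_left_injective 1)
    refine Summable.of_nonneg_of_le (fun k => ?_) hnormle hgeo
    positivity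
  have key := MeasureTheory.hasSum_integral_of_summable_integral_norm hint hsum
  have h2 : ∫ t, (∑' k, F k t) ∂μ = ∫ t in Ioi 0, G t / (γ * Real.exp (α * t) - 1) := by
    apply integral_congr_ae
    filter_upwards [ae_restrict_mem measurableSet_Ioi] with t ht
    have ht' : (0:ℝ) < t := ht
    have het : 1 < Real.exp (α * t) := by
      calc (1:ℝ) = Real.exp 0 := Real.exp_zero.symm
        _ < Real.exp (α * t) := Real.exp_lt_exp.mpr (by positivity)
    set x := γ * Real.exp (α * t) with hx
    have hx1 : 1 < |x| := by
      rw [hx, abs_mul, abs_of_pos (Real.exp_pos _)]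
      calc (1:ℝ) < |γ| := hγ
        _ = |γ| * 1 := (mul_one _).symm
        _ ≤ |γ| * Real.exp (α * t) := by
            apply mul_le_mul_of_nonneg_left het.le (abs_nonneg _)
    have hx0 : x ≠ 0 := by
      intro h; rw [h, abs_zero] at hx1; linarith
    have hxne : x - 1 ≠ 0 := by
      intro h
      have : x = 1 := by linarith
      rw [this, abs_one] at hx1; linarith
    have hrlt : |x⁻¹| < 1 := by
      rw [abs_inv, inv_lt_one_iff₀]; right; exact hx1
    have hFk : ∀ k : ℕ, F k t = (x⁻¹) ^ (k + 1) * G t := by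
      intro k
      rw [hF]
      simp only
      have : Real.exp (-(α * (k + 1) * t)) = (Real.exp (α * t))⁻¹ ^ (k + 1) := by
        rw [← Real.exp_neg, ← Real.exp_nat_mul]
        congr 1
        push_cast
        ring
      rw [this, hx, mul_inv, mul_pow]
      rw [show (-((k : ℤ) + 1)) = -((k + 1 : ℕ) : ℤ) by push_cast; ring,
        zpow_neg, zpow_natCast, ← inv_pow]
      ring
    have hgs : HasSum (fun k : ℕ => (x⁻¹) ^ (k + 1) * G t) (x⁻¹ * (1 - x⁻¹)⁻¹ * G t) := by
      have := (hasSum_geometric_of_abs_lt_one hrlt).mul_left x⁻¹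
      have := this.mul_right (G t)
      convert this using 2 with k
      · rfl
      · ring
    have heq : x⁻¹ * (1 - x⁻¹)⁻¹ * G t = G t / (x - 1) := by
      field_simp
    calc (∑' k, F k t) = ∑' k, (x⁻¹) ^ (k + 1) * G t := by
          exact tsum_congr hFk
      _ = x⁻¹ * (1 - x⁻¹)⁻¹ * G t := hgs.tsum_eq
      _ = G t / (x - 1) := heq
  rw [← h2]
  have h3 : ∀ k : ℕ, ∫ t, F k t ∂μ
      = γ ^ (-((k : ℤ) + 1)) * ∫ t in Ioi 0, Real.exp (-(α * (k + 1) * t)) * G t :=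
    fun k => integral_const_mul _ _
  simpa only [h3] using key
end

section
/- Let G : ℝ → ℝ be measurable and let α > 0. Assume that the function t ↦ |G(t)|/(e^{αt} − 1)² is integrable on (0, ∞). Then the differentiated series ∑'_{k=1}^∞ k · ∫₀^∞ e^{−α(k+1)t} G(t) dt converges and equals ∫₀^∞ G(t)/(e^{αt} − 1)² dt. -/
open MeasureTheory Real Set

lemma aux_hasSum {x : ℝ} (hx0 : 0 < x) (hx1 : x < 1) :
    HasSum (fun k : ℕ => ((k : ℝ) + 1) * x ^ (k + 2)) (x ^ 2 / (1 - x) ^ 2) := by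
  have h : HasSum (fun n : ℕ => (n : ℝ) * x ^ n) (x / (1 - x) ^ 2) :=
    hasSum_coe_mul_geometric_of_norm_lt_one
      (by rw [norm_eq_abs, abs_lt]; constructor <;> linarith)
  have h1 := (hasSum_nat_add_iff' (f := fun n : ℕ => (n : ℝ) * x ^ n) 1).mpr h
  simp only [Finset.range_one, Finset.sum_singleton, Nat.cast_zero, zero_mul, sub_zero] at h1
  have h2 := h1.mul_left x
  have heq : (fun k : ℕ => x * ((↑(k + 1) : ℝ) * x ^ (k + 1)))
      = fun k : ℕ => ((k : ℝ) + 1) * x ^ (k + 2) := by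
    funext k; push_cast; ring
  rw [heq] at h2
  convert h2 using 1
  · rfl
  ring

/-- Differentiated series: `∑_{k≥1} k ∫₀^∞ e^{-α(k+1)t} G(t) dt` converges to
`∫₀^∞ G(t)/(e^{αt} - 1)² dt`. -/
theorem differentiated_series_eq_integral (G : ℝ → ℝ) (hG : Measurable G) (α : ℝ) (hα : 0 < α)
    (hint : IntegrableOn (fun t => |G t| / (Real.exp (α * t) - 1) ^ 2) (Ioi 0)) :
    HasSum (fun k : ℕ =>
        ((k : ℝ) + 1) * ∫ t in Ioi 0, Real.exp (-(α * ((k + 1) + 1) * t)) * G t)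
      (∫ t in Ioi 0, G t / (Real.exp (α * t) - 1) ^ 2) := by
  set F : ℕ → ℝ → ℝ := fun k t => ((k : ℝ) + 1) * (Real.exp (-(α * ((k + 1) + 1) * t)) * G t)
    with hF
  -- basic facts for t > 0
  have hx0 : ∀ t : ℝ, 0 < t → 0 < Real.exp (-(α * t)) := fun t _ => Real.exp_pos _
  have hx1 : ∀ t : ℝ, 0 < t → Real.exp (-(α * t)) < 1 := by
    intro t ht
    rw [Real.exp_lt_one_iff]
    nlinarith
  have hxpow : ∀ (k : ℕ) (t : ℝ),
      Real.exp (-(α * t)) ^ (k + 2) = Real.exp (-(α * ((k + 1) + 1) * t)) := by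
    intro k t
    rw [← Real.exp_nat_mul]
    congr 1
    push_cast
    ring
  have hxfrac : ∀ t : ℝ, 0 < t →
      Real.exp (-(α * t)) ^ 2 / (1 - Real.exp (-(α * t))) ^ 2
        = 1 / (Real.exp (α * t) - 1) ^ 2 := by
    intro t ht
    have h1 : Real.exp (-(α * t)) * Real.exp (α * t) = 1 := by
      rw [← Real.exp_add]; simp
    have h2 : (1 - Real.exp (-(α * t))) = Real.exp (-(α * t)) * (Real.exp (α * t) - 1) := by
      rw [mul_sub, h1, mul_one]
    rw [h2, mul_pow]
    have hne : Real.exp (-(α * t)) ^ 2 ≠ 0 := by positivity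
    have hne2 : (Real.exp (α * t) - 1) ≠ 0 := by
      have : 1 < Real.exp (α * t) := by
        rw [Real.one_lt_exp_iff]; positivity
      linarith
    field_simp
  -- pointwise HasSum of F
  have hptws : ∀ t ∈ Ioi (0:ℝ), HasSum (fun k : ℕ => F k t)
      (G t / (Real.exp (α * t) - 1) ^ 2) := by
    intro t ht
    have h := (aux_hasSum (hx0 t ht) (hx1 t ht)).mul_right (G t)
    have : (fun k : ℕ => ((k:ℝ) + 1) * Real.exp (-(α * t)) ^ (k + 2) * G t)
        = fun k => F k t := by
      funext k; rw [hF]; simp only [hxpow]; ring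
    rw [this, hxfrac t ht] at h
    convert h using 1
    · rfl
    ring
  -- pointwise bound
  have hbd : ∀ (k : ℕ) (t : ℝ), 0 < t →
      ‖F k t‖ ≤ |G t| / (Real.exp (α * t) - 1) ^ 2 := by
    intro k t ht
    have hterm : ((k:ℝ) + 1) * Real.exp (-(α * t)) ^ (k + 2)
        ≤ Real.exp (-(α * t)) ^ 2 / (1 - Real.exp (-(α * t))) ^ 2 :=
      le_hasSum (aux_hasSum (hx0 t ht) (hx1 t ht)) k (fun j _ => by positivity)
    have hnn : (0:ℝ) ≤ ((k:ℝ) + 1) * Real.exp (-(α * t)) ^ (k + 2) := by positivity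
    calc ‖F k t‖ = ((k:ℝ) + 1) * Real.exp (-(α * t)) ^ (k + 2) * |G t| := by
          rw [hF]; simp only [hxpow]
          rw [Real.norm_eq_abs, abs_mul, abs_mul]
          rw [abs_of_nonneg (by positivity : (0:ℝ) ≤ (k:ℝ)+1),
            abs_of_nonneg (Real.exp_nonneg _)]
          ring
      _ ≤ Real.exp (-(α * t)) ^ 2 / (1 - Real.exp (-(α * t))) ^ 2 * |G t| := by
          exact mul_le_mul_of_nonneg_right hterm (abs_nonneg _)
      _ = |G t| / (Real.exp (α * t) - 1) ^ 2 := by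
          rw [hxfrac t ht]; ring
  -- measurability and integrability of each F k
  have hmeas : ∀ k : ℕ, Measurable (F k) := by
    intro k
    apply Measurable.const_mul
    exact (Real.measurable_exp.comp (measurable_const.mul measurable_id).neg).mul hG
  have hFint : ∀ k : ℕ, IntegrableOn (F k) (Ioi 0) := by
    intro k
    refine Integrable.mono' hint ((hmeas k).aestronglyMeasurable) ?_
    filter_upwards [ae_restrict_mem measurableSet_Ioi] with t ht
    exact hbd k t ht
  -- summability of integrals of norms
  have hnorms : Summable fun k : ℕ => ∫ t in Ioi 0, ‖F k t‖ := by
    apply summable_of_sum_le (c := ∫ t in Ioi 0, |G t| / (Real.exp (α * t) - 1) ^ 2)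
    · intro k; positivity
    · intro s
      rw [← integral_finset_sum _ (fun k _ => (hFint k).norm)]
      apply setIntegral_mono_on
      · exact integrable_finset_sum _ (fun k _ => (hFint k).norm)
      · exact hint
      · exact measurableSet_Ioi
      · intro t ht
        have hsum : Summable fun k : ℕ => ‖F k t‖ := by
          have := ((aux_hasSum (hx0 t ht) (hx1 t ht)).mul_right |G t|).summable
          apply Summable.congr this
          intro k
          rw [hF]; simp only [hxpow]
          rw [Real.norm_eq_abs, abs_mul, abs_mul]
          rw [abs_of_nonneg (by positivity : (0:ℝ) ≤ (k:ℝ)+1),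
            abs_of_nonneg (Real.exp_nonneg _)]
          ring
        calc ∑ k ∈ s, ‖F k t‖ ≤ ∑' k, ‖F k t‖ :=
              Summable.sum_le_tsum s (fun k _ => norm_nonneg _) hsum
          _ = Real.exp (-(α * t)) ^ 2 / (1 - Real.exp (-(α * t))) ^ 2 * |G t| := by
              refine HasSum.tsum_eq ?_
              refine HasSum.congr_fun ((aux_hasSum (hx0 t ht) (hx1 t ht)).mul_right |G t|) ?_
              intro k
              rw [hF]; simp only [hxpow]
              rw [Real.norm_eq_abs, abs_mul, abs_mul]
              rw [abs_of_nonneg (by positivity : (0:ℝ) ≤ (k:ℝ)+1),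
                abs_of_nonneg (Real.exp_nonneg _)]
              ring
          _ = |G t| / (Real.exp (α * t) - 1) ^ 2 := by rw [hxfrac t ht]; ring
  -- main sum/integral exchange
  have hmain := MeasureTheory.hasSum_integral_of_summable_integral_norm
    (F := F) (μ := volume.restrict (Ioi 0)) (fun k => hFint k) hnorms
  have heqint : (∫ t in Ioi 0, ∑' k, F k t)
      = ∫ t in Ioi 0, G t / (Real.exp (α * t) - 1) ^ 2 := by
    apply setIntegral_congr_fun measurableSet_Ioi
    intro t ht
    exact (hptws t ht).tsum_eq
  rw [heqint] at hmain
  refine HasSum.congr_fun hmain ?_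
  intro k
  show _ = ∫ t in Ioi 0, ((k:ℝ) + 1) * (Real.exp (-(α * ((k + 1) + 1) * t)) * G t)
  rw [MeasureTheory.integral_const_mul]
end

section
/- Let G : ℝ → ℝ be measurable and let α > 0. Assume that the function t ↦ |G(t)|/(e^{αt} − 1)² is integrable on (0, ∞). Then the differentiated alternating series ∑'_{k=1}^∞ (−1)^{k+1} k · ∫₀^∞ e^{−α(k+1)t} G(t) dt converges and equals ∫₀^∞ G(t)/(e^{αt} + 1)² dt. -/
open MeasureTheory Real Set

lemma aux_hasSum_pos (x : ℝ) (hx0 : 0 < x) (hx1 : x < 1) :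
    HasSum (fun k : ℕ => ((k : ℝ) + 1) * x ^ (k + 2)) (x ^ 2 / (1 - x) ^ 2) := by
  have h := hasSum_coe_mul_geometric_of_norm_lt_one (𝕜 := ℝ)
    (r := x) (by rw [norm_eq_abs, abs_of_pos hx0]; exact hx1)
  have h2 := h.mul_left x
  have h3 : HasSum (fun n : ℕ => x * ((↑(n + 1) : ℝ) * x ^ (n + 1)))
      (x * (x / (1 - x) ^ 2)) := by
    apply (hasSum_nat_add_iff (f := fun n : ℕ => x * ((n : ℝ) * x ^ n)) 1).mpr
    simpa using h2
  have h4 : (fun k : ℕ => ((k : ℝ) + 1) * x ^ (k + 2)) =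
      fun n : ℕ => x * ((↑(n + 1) : ℝ) * x ^ (n + 1)) := by
    funext k; push_cast; ring
  rw [h4]
  convert h3 using 1
  ring

lemma aux_hasSum_alt (x : ℝ) (hx0 : 0 < x) (hx1 : x < 1) :
    HasSum (fun k : ℕ => (-1 : ℝ) ^ k * ((k : ℝ) + 1) * x ^ (k + 2))
      (x ^ 2 / (1 + x) ^ 2) := by
  have h := hasSum_coe_mul_geometric_of_norm_lt_one (𝕜 := ℝ)
    (r := -x) (by rw [norm_neg, norm_eq_abs, abs_of_pos hx0]; exact hx1)
  have h2 := h.mul_left (-x)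
  have h3 : HasSum (fun n : ℕ => -x * ((↑(n + 1) : ℝ) * (-x) ^ (n + 1)))
      (-x * (-x / (1 - -x) ^ 2)) := by
    apply (hasSum_nat_add_iff (f := fun n : ℕ => -x * ((n : ℝ) * (-x) ^ n)) 1).mpr
    simpa using h2
  have h4 : (fun k : ℕ => (-1 : ℝ) ^ k * ((k : ℝ) + 1) * x ^ (k + 2)) =
      fun n : ℕ => -x * ((↑(n + 1) : ℝ) * (-x) ^ (n + 1)) := by
    funext k
    rw [neg_pow]
    push_cast
    ring
  rw [h4]
  convert h3 using 1
  rw [sub_neg_eq_add]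
  ring

/-- Differentiated alternating series: `∑_{k≥1} (-1)^{k+1} k ∫₀^∞ e^{-α(k+1)t} G(t) dt`
converges to `∫₀^∞ G(t)/(e^{αt} + 1)² dt`. -/
theorem differentiated_alt_series_eq_integral (G : ℝ → ℝ) (hG : Measurable G) (α : ℝ)
    (hα : 0 < α)
    (hint : IntegrableOn (fun t => |G t| / (Real.exp (α * t) - 1) ^ 2) (Ioi 0)) :
    HasSum (fun k : ℕ =>
        (-1 : ℝ) ^ k * ((k : ℝ) + 1) * ∫ t in Ioi 0, Real.exp (-(α * ((k + 1) + 1) * t)) * G t)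
      (∫ t in Ioi 0, G t / (Real.exp (α * t) + 1) ^ 2) := by
  have key : ∀ t ∈ Ioi (0 : ℝ),
      HasSum (fun k : ℕ => ‖(-1 : ℝ) ^ k * ((k : ℝ) + 1) *
          (Real.exp (-(α * ((k + 1) + 1) * t)) * G t)‖)
        (|G t| / (Real.exp (α * t) - 1) ^ 2) ∧
      HasSum (fun k : ℕ => (-1 : ℝ) ^ k * ((k : ℝ) + 1) *
          (Real.exp (-(α * ((k + 1) + 1) * t)) * G t))
        (G t / (Real.exp (α * t) + 1) ^ 2) := by
    intro t ht
    have htpos : (0 : ℝ) < t := ht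
    set x := Real.exp (-(α * t)) with hx
    have hx0 : 0 < x := Real.exp_pos _
    have hx1 : x < 1 := by
      rw [hx, show (1 : ℝ) = Real.exp 0 by simp]
      exact Real.exp_lt_exp.mpr (by nlinarith)
    have hexp : ∀ k : ℕ, Real.exp (-(α * ((k : ℝ) + 1 + 1) * t)) = x ^ (k + 2) := by
      intro k
      rw [hx, ← Real.exp_nat_mul]
      congr 1; push_cast; ring
    have he1 : x * Real.exp (α * t) = 1 := by rw [hx, ← Real.exp_add]; simp
    have hegt : 1 < Real.exp (α * t) := by
      rw [show (1 : ℝ) = Real.exp 0 by simp]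
      exact Real.exp_lt_exp.mpr (by positivity)
    have h1x : 1 - x = x * (Real.exp (α * t) - 1) := by rw [mul_sub, mul_one, he1]
    have h1px : 1 + x = x * (Real.exp (α * t) + 1) := by rw [mul_add, mul_one, he1]
    have hxne : x ≠ 0 := ne_of_gt hx0
    have hene : Real.exp (α * t) - 1 ≠ 0 := ne_of_gt (by linarith)
    have hpne : Real.exp (α * t) + 1 ≠ 0 := by positivity
    constructor
    · have h := (aux_hasSum_pos x hx0 hx1).mul_right |G t|
      have hfun : (fun k : ℕ => ‖(-1 : ℝ) ^ k * ((k : ℝ) + 1) *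
          (Real.exp (-(α * ((k + 1) + 1) * t)) * G t)‖) =
          fun k : ℕ => ((k : ℝ) + 1) * x ^ (k + 2) * |G t| := by
        funext k
        rw [hexp k]
        rw [norm_eq_abs, abs_mul, abs_mul, abs_mul, abs_pow, abs_neg, abs_one, one_pow,
          one_mul, abs_pow, abs_of_pos hx0,
          abs_of_nonneg (by positivity : (0:ℝ) ≤ (k:ℝ)+1)]
        ring
      rw [hfun]
      convert h using 1
      · rfl
      rw [h1x, mul_pow]
      field_simp
    · have h := (aux_hasSum_alt x hx0 hx1).mul_right (G t)
      have hfun : (fun k : ℕ => (-1 : ℝ) ^ k * ((k : ℝ) + 1) *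
          (Real.exp (-(α * ((k + 1) + 1) * t)) * G t)) =
          fun k : ℕ => (-1 : ℝ) ^ k * ((k : ℝ) + 1) * x ^ (k + 2) * G t := by
        funext k; rw [hexp k]; ring
      rw [hfun]
      convert h using 1
      · rfl
      rw [h1px, mul_pow]
      field_simp
  set f : ℕ → ℝ → ℝ := fun k t => (-1 : ℝ) ^ k * ((k : ℝ) + 1) *
      (Real.exp (-(α * ((k : ℝ) + 1 + 1) * t)) * G t) with hf
  have hmeas : ∀ k, Measurable (f k) := by
    intro k
    apply (measurable_const.mul ((Real.measurable_exp.comp (by fun_prop)).mul hG))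
  have hInt : ∀ k, Integrable (f k) (volume.restrict (Ioi 0)) := by
    intro k
    refine hint.mono' (hmeas k).aestronglyMeasurable ?_
    filter_upwards [ae_restrict_mem measurableSet_Ioi] with t ht
    exact le_hasSum (key t ht).1 k (fun j _ => norm_nonneg _)
  have hIntNorm : ∀ k, Integrable (fun t => ‖f k t‖) (volume.restrict (Ioi 0)) :=
    fun k => (hInt k).norm
  have hSum : Summable (fun k => ∫ t in Ioi 0, ‖f k t‖) := by
    apply summable_of_sum_range_le (c := ∫ t in Ioi 0, |G t| / (Real.exp (α * t) - 1) ^ 2)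
      (fun k => integral_nonneg (fun t => norm_nonneg _))
    intro n
    rw [← integral_finset_sum _ (fun k _ => hIntNorm k)]
    apply setIntegral_mono_on (integrable_finset_sum _ fun k _ => hIntNorm k) hint
      measurableSet_Ioi
    intro t ht
    exact sum_le_hasSum _ (fun k _ => norm_nonneg _) (key t ht).1
  have H := hasSum_integral_of_summable_integral_norm hInt hSum
  have hEq : (∫ t in Ioi 0, ∑' k, f k t) =
      ∫ t in Ioi 0, G t / (Real.exp (α * t) + 1) ^ 2 :=
    setIntegral_congr_fun measurableSet_Ioi (fun t ht => ((key t ht).2).tsum_eq)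
  rw [hEq] at H
  convert H using 2 with k
  · rfl
  rw [hf]
  exact (integral_const_mul _ _).symm
end

section
/- Let G : ℝ → ℝ be measurable and let α > 0. Assume that the function t ↦ |G(t)| · |log(1 − e^{−αt})| is integrable on (0, ∞). Then the integrated alternating series ∑'_{k=1}^∞ (−1)^{k+1} (1/k) ∫₀^∞ e^{−αkt} G(t) dt converges and equals ∫₀^∞ G(t) · log(1 + e^{−αt}) dt. -/
open MeasureTheory Real Set

private lemma log_one_add_hasSum {x : ℝ} (hx : |x| < 1) :
    HasSum (fun k : ℕ => (-1 : ℝ) ^ k * (1 / ((k : ℝ) + 1)) * x ^ (k + 1))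
      (Real.log (1 + x)) := by
  have h := (Real.hasSum_pow_div_log_of_abs_lt_one (x := -x) (by rwa [abs_neg])).neg
  rw [sub_neg_eq_add, neg_neg] at h
  convert h using 2 with k
  · exact rfl
  rw [neg_pow, pow_succ]
  ring

/-- Integrated alternating series: `∑_{k≥1} (-1)^{k+1} (1/k) ∫₀^∞ e^{-αkt} G(t) dt`
converges to `∫₀^∞ G(t) log(1 + e^{-αt}) dt`. -/
theorem integrated_alt_series_eq_integral (G : ℝ → ℝ) (hG : Measurable G) (α : ℝ) (hα : 0 < α)
    (hint : IntegrableOn (fun t => |G t| * |Real.log (1 - Real.exp (-(α * t)))|) (Ioi 0)) :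
    HasSum (fun k : ℕ =>
        (-1 : ℝ) ^ k * (1 / ((k : ℝ) + 1)) * ∫ t in Ioi 0, Real.exp (-(α * (k + 1) * t)) * G t)
      (∫ t in Ioi 0, G t * Real.log (1 + Real.exp (-(α * t)))) := by
  set F : ℕ → ℝ → ℝ := fun k t =>
    (-1 : ℝ) ^ k * (1 / ((k : ℝ) + 1)) * (Real.exp (-(α * ((k : ℝ) + 1) * t)) * G t) with hF
  have hx1 : ∀ t ∈ Ioi (0 : ℝ), Real.exp (-(α * t)) < 1 := by
    intro t ht
    rw [Real.exp_lt_one_iff]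
    have := mul_pos hα ht
    linarith
  have hpow : ∀ (k : ℕ) (t : ℝ),
      Real.exp (-(α * ((k : ℝ) + 1) * t)) = Real.exp (-(α * t)) ^ (k + 1) := by
    intro k t
    rw [show -(α * ((k : ℝ) + 1) * t) = ((k + 1 : ℕ) : ℝ) * (-(α * t)) by push_cast; ring,
      Real.exp_nat_mul]
  have hnormF : ∀ (k : ℕ) (t : ℝ),
      ‖F k t‖ = (1 / ((k : ℝ) + 1)) * Real.exp (-(α * t)) ^ (k + 1) * |G t| := by
    intro k t
    rw [hF]
    simp only [Real.norm_eq_abs, abs_mul, abs_pow, abs_neg, abs_one, one_pow, one_mul]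
    rw [abs_of_nonneg (by positivity : (0:ℝ) ≤ 1 / ((k : ℝ) + 1)),
      abs_of_nonneg (Real.exp_pos _).le, hpow]
    ring
  have habs : ∀ t ∈ Ioi (0 : ℝ),
      |Real.log (1 - Real.exp (-(α * t)))| = -Real.log (1 - Real.exp (-(α * t))) := by
    intro t ht
    have h1 := Real.exp_pos (-(α * t))
    have h2 := hx1 t ht
    exact abs_of_nonpos (Real.log_nonpos (by linarith) (by linarith))
  -- single-term pointwise bound
  have hbound : ∀ (k : ℕ), ∀ t ∈ Ioi (0 : ℝ),
      ‖F k t‖ ≤ |G t| * |Real.log (1 - Real.exp (-(α * t)))| := by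
    intro k t ht
    rw [hnormF, habs t ht]
    set x := Real.exp (-(α * t)) with hxdef
    have hx : |x| < 1 := by
      rw [abs_of_pos (Real.exp_pos _)]
      exact hx1 t ht
    have h1 : x ^ (k + 1) / ((k : ℝ) + 1) ≤ -Real.log (1 - x) := by
      have := le_hasSum (Real.hasSum_pow_div_log_of_abs_lt_one hx) k
        (fun j _ => by positivity)
      simpa using this
    calc 1 / ((k : ℝ) + 1) * x ^ (k + 1) * |G t|
        ≤ -Real.log (1 - x) * |G t| := by
          apply mul_le_mul_of_nonneg_right _ (abs_nonneg _)
          rw [one_div, inv_mul_eq_div]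
          linarith [h1]
      _ = |G t| * -Real.log (1 - x) := by ring
  have hFmeas : ∀ k : ℕ, AEStronglyMeasurable (F k) (volume.restrict (Ioi 0)) := by
    intro k
    exact ((((measurable_id.const_mul (α * ((k : ℝ) + 1))).neg.exp).mul hG).const_mul
      _).aestronglyMeasurable
  have hFint : ∀ k : ℕ, Integrable (F k) (volume.restrict (Ioi 0)) := by
    intro k
    refine Integrable.mono hint (hFmeas k) ?_
    filter_upwards [ae_restrict_mem measurableSet_Ioi] with t ht
    calc ‖F k t‖ ≤ |G t| * |Real.log (1 - Real.exp (-(α * t)))| := hbound k t ht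
      _ ≤ ‖|G t| * |Real.log (1 - Real.exp (-(α * t)))|‖ := le_abs_self _
  -- summability of integrals of norms
  have hsum : Summable fun k : ℕ => ∫ t in Ioi 0, ‖F k t‖ := by
    apply summable_of_sum_range_le
      (c := ∫ t in Ioi 0, |G t| * |Real.log (1 - Real.exp (-(α * t)))|)
      (fun k => integral_nonneg fun t => norm_nonneg _)
    intro n
    rw [← integral_finset_sum _ (fun k _ => (hFint k).norm)]
    apply integral_mono_ae (integrable_finset_sum _ (fun k _ => (hFint k).norm)) hint
    filter_upwards [ae_restrict_mem measurableSet_Ioi] with t ht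
    rw [habs t ht]
    set x := Real.exp (-(α * t)) with hxdef
    have hx : |x| < 1 := by
      rw [abs_of_pos (Real.exp_pos _)]
      exact hx1 t ht
    have hS := Real.hasSum_pow_div_log_of_abs_lt_one hx
    have hpart : ∑ k ∈ Finset.range n, x ^ (k + 1) / ((k : ℝ) + 1) ≤ -Real.log (1 - x) := by
      refine sum_le_hasSum _ (fun j _ => by positivity) hS
    calc ∑ k ∈ Finset.range n, ‖F k t‖
        = (∑ k ∈ Finset.range n, x ^ (k + 1) / ((k : ℝ) + 1)) * |G t| := by
          rw [Finset.sum_mul]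
          exact Finset.sum_congr rfl fun k _ => by rw [hnormF]; ring
      _ ≤ -Real.log (1 - x) * |G t| :=
          mul_le_mul_of_nonneg_right hpart (abs_nonneg _)
      _ = |G t| * -Real.log (1 - x) := by ring
  have key := hasSum_integral_of_summable_integral_norm hFint hsum
  -- identify the tsum
  have htsum : ∫ t in Ioi 0, (∑' k, F k t) =
      ∫ t in Ioi 0, G t * Real.log (1 + Real.exp (-(α * t))) := by
    apply integral_congr_ae
    filter_upwards [ae_restrict_mem measurableSet_Ioi] with t ht
    set x := Real.exp (-(α * t)) with hxdef
    have hx : |x| < 1 := by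
      rw [abs_of_pos (Real.exp_pos _)]
      exact hx1 t ht
    have h := (log_one_add_hasSum hx).mul_right (G t)
    have heq : (fun k : ℕ => F k t)
        = fun k : ℕ => (-1 : ℝ) ^ k * (1 / ((k : ℝ) + 1)) * x ^ (k + 1) * G t := by
      funext k
      simp only [hF, hpow]
      ring
    rw [show (∑' k, F k t) = Real.log (1 + x) * G t by rw [heq]; exact h.tsum_eq]
    ring
  have hfun : (fun k : ℕ => ∫ t in Ioi 0, F k t)
      = fun k : ℕ => (-1 : ℝ) ^ k * (1 / ((k : ℝ) + 1)) *
          ∫ t in Ioi 0, Real.exp (-(α * ((k : ℝ) + 1) * t)) * G t := by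
    funext k
    simp only [hF]
    exact integral_const_mul _ _
  rw [hfun, htsum] at key
  exact key
end

section
/- Let G : ℝ → ℝ be measurable and let α > 0. Assume that the function t ↦ |G(t)|/(e^{αt} − e^{−αt}) is integrable on (0, ∞). Then the odd-index series ∑'_{k=1}^∞ ∫₀^∞ e^{−α(2k−1)t} G(t) dt converges and equals ∫₀^∞ G(t)/(e^{αt} − e^{−αt}) dt. -/
open MeasureTheory Real Set

/-- Hyperbolic inverted sine series: `∑_{k≥1} ∫₀^∞ e^{-α(2k-1)t} G(t) dt`
converges to `∫₀^∞ G(t)/(e^{αt} - e^{-αt}) dt`. -/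
theorem odd_index_series_eq_integral (G : ℝ → ℝ) (hG : Measurable G) (α : ℝ) (hα : 0 < α)
    (hint : IntegrableOn (fun t => |G t| / (Real.exp (α * t) - Real.exp (-(α * t)))) (Ioi 0)) :
    HasSum (fun k : ℕ => ∫ t in Ioi 0, Real.exp (-(α * (2 * k + 1) * t)) * G t)
      (∫ t in Ioi 0, G t / (Real.exp (α * t) - Real.exp (-(α * t)))) := by
  set D : ℝ → ℝ := fun t => |G t| / (Real.exp (α * t) - Real.exp (-(α * t))) with hDdef
  set F : ℕ → ℝ → ℝ := fun k t => Real.exp (-(α * (2 * k + 1) * t)) * G t with hFdef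
  have hden : ∀ t : ℝ, 0 < t → 0 < Real.exp (α * t) - Real.exp (-(α * t)) := by
    intro t ht
    have : -(α * t) < α * t := by nlinarith
    simpa using Real.exp_lt_exp.mpr this
  have hterm : ∀ (k : ℕ) (t : ℝ),
      Real.exp (-(α * t)) * Real.exp (-(2 * α * t)) ^ k = Real.exp (-(α * (2 * k + 1) * t)) := by
    intro k t
    rw [← Real.exp_nat_mul, ← Real.exp_add]
    congr 1; push_cast; ring
  -- key pointwise summation for an arbitrary multiplier X
  have hHS : ∀ t : ℝ, 0 < t → ∀ X : ℝ,
      HasSum (fun k : ℕ => Real.exp (-(α * (2 * k + 1) * t)) * X)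
        (X / (Real.exp (α * t) - Real.exp (-(α * t)))) := by
    intro t ht X
    have hr1 : Real.exp (-(2 * α * t)) < 1 := by
      rw [Real.exp_lt_one_iff]; nlinarith
    have hgeo := (hasSum_geometric_of_lt_one (Real.exp_pos _).le hr1).mul_left
      (Real.exp (-(α * t)) * X)
    have heq : (fun k : ℕ => Real.exp (-(α * t)) * X * Real.exp (-(2 * α * t)) ^ k)
        = fun k : ℕ => Real.exp (-(α * (2 * k + 1) * t)) * X := by
      funext k; rw [← hterm k t]; ring
    rw [heq] at hgeo
    convert hgeo using 1
    · rfl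
    have h1 : (0 : ℝ) < 1 - Real.exp (-(2 * α * t)) := by linarith
    have hd := hden t ht
    have hmul : Real.exp (-(α * t)) * Real.exp (α * t) = 1 := by
      rw [← Real.exp_add]; simp
    have hde : Real.exp (α * t) - Real.exp (-(α * t))
        = Real.exp (α * t) * (1 - Real.exp (-(2 * α * t))) := by
      rw [mul_sub, mul_one, ← Real.exp_add]; ring_nf
    rw [hde, div_eq_iff (by positivity),
      show Real.exp (-(α * t)) * X * (1 - Real.exp (-(2 * α * t)))⁻¹ *
          (Real.exp (α * t) * (1 - Real.exp (-(2 * α * t))))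
        = (Real.exp (-(α * t)) * Real.exp (α * t)) * X *
          ((1 - Real.exp (-(2 * α * t)))⁻¹ * (1 - Real.exp (-(2 * α * t)))) from by ring,
      hmul, inv_mul_cancel₀ h1.ne']
    ring
  have habs : ∀ t : ℝ, 0 < t → HasSum (fun k : ℕ => |F k t|) (D t) := by
    intro t ht
    have := hHS t ht |G t|
    convert this using 2 with k
    rw [hFdef]; simp only [abs_mul, abs_of_pos (Real.exp_pos _)]
  have hptsum : ∀ t : ℝ, 0 < t →
      HasSum (fun k : ℕ => F k t) (G t / (Real.exp (α * t) - Real.exp (-(α * t)))) :=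
    fun t ht => hHS t ht (G t)
  have hFmeas : ∀ k : ℕ, Measurable (F k) := fun k =>
    (Real.measurable_exp.comp ((measurable_const.mul measurable_id).neg)).mul hG
  have hFint : ∀ k : ℕ, IntegrableOn (F k) (Ioi 0) := by
    intro k
    apply Integrable.mono hint ((hFmeas k).aestronglyMeasurable.restrict)
    filter_upwards [ae_restrict_mem measurableSet_Ioi] with t ht
    rw [Real.norm_eq_abs, Real.norm_eq_abs]
    exact (le_hasSum (habs t ht) k (fun j _ => abs_nonneg _)).trans (le_abs_self _)
  have hsumnorm : Summable (fun k : ℕ => ∫ t in Ioi 0, ‖F k t‖) := by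
    apply summable_of_sum_range_le (c := ∫ t in Ioi 0, D t)
    · intro n
      exact integral_nonneg fun t => norm_nonneg _
    · intro n
      rw [← integral_finset_sum _ (fun k _ => (hFint k).norm)]
      apply integral_mono_ae (integrable_finset_sum _ (fun k _ => (hFint k).norm)) hint
      filter_upwards [ae_restrict_mem measurableSet_Ioi] with t ht
      have h := habs t ht
      calc (Finset.range n).sum (fun k => ‖F k t‖)
          = (Finset.range n).sum (fun k => |F k t|) := by simp [Real.norm_eq_abs]
        _ ≤ D t := sum_le_hasSum _ (fun k _ => abs_nonneg _) h
  have key := MeasureTheory.hasSum_integral_of_summable_integral_norm hFint hsumnorm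
  have hcong : (∫ t in Ioi 0, ∑' k : ℕ, F k t)
      = ∫ t in Ioi 0, G t / (Real.exp (α * t) - Real.exp (-(α * t))) := by
    apply integral_congr_ae
    filter_upwards [ae_restrict_mem measurableSet_Ioi] with t ht
    exact (hptsum t ht).tsum_eq
  rw [hcong] at key
  exact key
end

section
/- Let G : ℝ → ℝ be measurable and let α > 0. Assume that the function t ↦ |G(t)|/(e^{αt} − e^{−αt}) is integrable on (0, ∞). Then the alternating odd-index series ∑'_{k=1}^∞ (−1)^{k+1} ∫₀^∞ e^{−α(2k−1)t} G(t) dt converges and equals ∫₀^∞ G(t)/(e^{αt} + e^{−αt}) dt. -/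
open MeasureTheory Real Set

/-- Hyperbolic inverted cosine series: `∑_{k≥1} (-1)^{k+1} ∫₀^∞ e^{-α(2k-1)t} G(t) dt`
converges to `∫₀^∞ G(t)/(e^{αt} + e^{-αt}) dt`. -/
theorem alt_odd_index_series_eq_integral (G : ℝ → ℝ) (hG : Measurable G) (α : ℝ) (hα : 0 < α)
    (hint : IntegrableOn (fun t => |G t| / (Real.exp (α * t) - Real.exp (-(α * t)))) (Ioi 0)) :
    HasSum (fun k : ℕ =>
        (-1 : ℝ) ^ k * ∫ t in Ioi 0, Real.exp (-(α * (2 * k + 1) * t)) * G t)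
      (∫ t in Ioi 0, G t / (Real.exp (α * t) + Real.exp (-(α * t)))) := by
  set F : ℕ → ℝ → ℝ := fun k t => (-1 : ℝ)^k * (Real.exp (-(α * (2 * k + 1) * t)) * G t)
    with hFdef
  -- r t := exp(-(2αt))
  have hr1 : ∀ t ∈ Ioi (0:ℝ), Real.exp (-(2*α*t)) < 1 := by
    intro t ht
    rw [Real.exp_lt_one_iff]
    have : (0:ℝ) < t := ht
    nlinarith
  have hden : ∀ t ∈ Ioi (0:ℝ), 0 < Real.exp (α * t) - Real.exp (-(α * t)) := by
    intro t ht
    have : (0:ℝ) < t := ht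
    have : -(α * t) < α * t := by nlinarith
    linarith [Real.exp_lt_exp.mpr this]
  -- term rewriting: exp(-(α(2k+1)t)) = exp(-(αt)) * (exp(-(2αt)))^k
  have hterm : ∀ (k : ℕ) (t : ℝ),
      Real.exp (-(α * (2 * k + 1) * t))
        = Real.exp (-(α * t)) * (Real.exp (-(2*α*t)))^k := by
    intro k t
    rw [← Real.exp_nat_mul, ← Real.exp_add]
    congr 1
    ring
  -- factorization of denominators
  have hfac : ∀ t : ℝ, Real.exp (α * t) - Real.exp (-(α * t))
      = Real.exp (α * t) * (1 - Real.exp (-(2*α*t))) := by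
    intro t
    rw [mul_sub, mul_one, ← Real.exp_add]
    congr 2
    ring
  have hfac' : ∀ t : ℝ, Real.exp (α * t) + Real.exp (-(α * t))
      = Real.exp (α * t) * (1 + Real.exp (-(2*α*t))) := by
    intro t
    rw [mul_add, mul_one, ← Real.exp_add]
    congr 2
    ring
  -- geometric tsum: ∑' k, exp(-(αt)) r^k = 1/(e^{αt}-e^{-αt}) for t > 0
  have hgeo : ∀ t ∈ Ioi (0:ℝ),
      Real.exp (-(α * t)) * (1 - Real.exp (-(2*α*t)))⁻¹
        = (Real.exp (α * t) - Real.exp (-(α * t)))⁻¹ := by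
    intro t ht
    rw [hfac, mul_inv, ← Real.exp_neg]
  -- single-term bound for integrability
  have hbound1 : ∀ (k : ℕ), ∀ t ∈ Ioi (0:ℝ),
      Real.exp (-(α * (2 * k + 1) * t))
        ≤ (Real.exp (α * t) - Real.exp (-(α * t)))⁻¹ := by
    intro k t ht
    rw [hterm, ← hgeo t ht]
    have h0 : (0:ℝ) ≤ Real.exp (-(2*α*t)) := (Real.exp_pos _).le
    have h1 := hr1 t ht
    have hinv : 1 ≤ (1 - Real.exp (-(2*α*t)))⁻¹ :=
      (one_le_inv₀ (by linarith)).mpr (by linarith)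
    calc Real.exp (-(α * t)) * Real.exp (-(2*α*t)) ^ k
        ≤ Real.exp (-(α * t)) * 1 := by
          gcongr
          exact pow_le_one₀ h0 h1.le
      _ ≤ Real.exp (-(α * t)) * (1 - Real.exp (-(2*α*t)))⁻¹ := by
          gcongr
  -- integrability of each F k
  have hFint : ∀ k : ℕ, IntegrableOn (F k) (Ioi 0) := by
    intro k
    apply Integrable.mono hint
    · apply Measurable.aestronglyMeasurable
      apply Measurable.const_mul
      exact ((Real.measurable_exp.comp (by fun_prop)).mul hG)
    · rw [ae_restrict_iff' measurableSet_Ioi]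
      filter_upwards with t ht
      have hd := hden t ht
      have hb := hbound1 k t ht
      simp only [hFdef, norm_mul, norm_pow, norm_neg, norm_one, one_pow, one_mul,
        Real.norm_eq_abs, Real.abs_exp, abs_abs]
      rw [abs_of_nonneg (div_nonneg (abs_nonneg _) hd.le)]
      rw [div_eq_mul_inv, mul_comm (|G t|)]
      exact mul_le_mul_of_nonneg_right hb (abs_nonneg _)
  -- summability of integrals of norms
  have hsumm : Summable fun k => ∫ t in Ioi 0, ‖F k t‖ := by
    apply summable_of_sum_range_le (c := ∫ t in Ioi 0, |G t| / (Real.exp (α * t) - Real.exp (-(α * t))))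
    · intro k
      exact integral_nonneg fun t => norm_nonneg _
    · intro n
      rw [← integral_finset_sum _ (fun k _ => (hFint k).norm)]
      apply setIntegral_mono_on
      · exact integrable_finset_sum _ (fun k _ => (hFint k).norm)
      · exact hint
      · exact measurableSet_Ioi
      · intro t ht
        have hd := hden t ht
        have hsum_le : ∑ k ∈ Finset.range n, Real.exp (-(α * (2 * k + 1) * t))
            ≤ (Real.exp (α * t) - Real.exp (-(α * t)))⁻¹ := by
          have h0 : (0:ℝ) ≤ Real.exp (-(2*α*t)) := (Real.exp_pos _).le
          have h1 := hr1 t ht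
          calc ∑ k ∈ Finset.range n, Real.exp (-(α * (2 * k + 1) * t))
              = Real.exp (-(α * t)) * ∑ k ∈ Finset.range n, (Real.exp (-(2*α*t)))^k := by
                rw [Finset.mul_sum]
                exact Finset.sum_congr rfl fun k _ => hterm k t
            _ ≤ Real.exp (-(α * t)) * (1 - Real.exp (-(2*α*t)))⁻¹ := by
                gcongr
                calc ∑ k ∈ Finset.range n, (Real.exp (-(2*α*t)))^k
                    ≤ ∑' k : ℕ, (Real.exp (-(2*α*t)))^k :=
                      Summable.sum_le_tsum _ (fun k _ => pow_nonneg h0 k)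
                        (summable_geometric_of_lt_one h0 h1)
                  _ = (1 - Real.exp (-(2*α*t)))⁻¹ := tsum_geometric_of_lt_one h0 h1
            _ = (Real.exp (α * t) - Real.exp (-(α * t)))⁻¹ := hgeo t ht
        calc ∑ k ∈ Finset.range n, ‖F k t‖
            = ∑ k ∈ Finset.range n, Real.exp (-(α * (2 * k + 1) * t)) * |G t| := by
              apply Finset.sum_congr rfl
              intro k _
              simp [hFdef, abs_mul, Real.abs_exp]
          _ = (∑ k ∈ Finset.range n, Real.exp (-(α * (2 * k + 1) * t))) * |G t| := by
              rw [Finset.sum_mul]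
          _ ≤ (Real.exp (α * t) - Real.exp (-(α * t)))⁻¹ * |G t| :=
              mul_le_mul_of_nonneg_right hsum_le (abs_nonneg _)
          _ = |G t| / (Real.exp (α * t) - Real.exp (-(α * t))) := by
              rw [div_eq_mul_inv, mul_comm]
  -- main convergence result
  have hmain := MeasureTheory.hasSum_integral_of_summable_integral_norm
    (μ := volume.restrict (Ioi 0)) hFint hsumm
  -- rewrite the integrand of the sum
  have hconv : (fun k : ℕ => ∫ t in Ioi 0, F k t)
      = fun k : ℕ => (-1 : ℝ)^k * ∫ t in Ioi 0, Real.exp (-(α * (2 * k + 1) * t)) * G t := by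
    funext k
    simp only [hFdef]
    rw [integral_const_mul]
  rw [hconv] at hmain
  -- rewrite the integral of the tsum
  have heq : ∫ t in Ioi 0, ∑' k : ℕ, F k t
      = ∫ t in Ioi 0, G t / (Real.exp (α * t) + Real.exp (-(α * t))) := by
    apply setIntegral_congr_fun measurableSet_Ioi
    intro t ht
    have hd' : 0 < Real.exp (α * t) + Real.exp (-(α * t)) := by positivity
    have h1 := hr1 t ht
    have hnorm : ‖-Real.exp (-(2*α*t))‖ < 1 := by
      rw [norm_neg, Real.norm_eq_abs, Real.abs_exp]
      exact h1
    have hFt : ∀ k : ℕ, F k t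
        = (G t * Real.exp (-(α * t))) * (-Real.exp (-(2*α*t)))^k := by
      intro k
      simp only [hFdef]
      rw [hterm, neg_pow]
      ring
    calc ∑' k : ℕ, F k t
        = ∑' k : ℕ, (G t * Real.exp (-(α * t))) * (-Real.exp (-(2*α*t)))^k := by
          exact tsum_congr hFt
      _ = (G t * Real.exp (-(α * t))) * (1 - (-Real.exp (-(2*α*t))))⁻¹ := by
          rw [tsum_mul_left, tsum_geometric_of_norm_lt_one hnorm]
      _ = G t / (Real.exp (α * t) + Real.exp (-(α * t))) := by
          rw [sub_neg_eq_add, hfac' t, eq_div_iff (by positivity)]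
          have hx : Real.exp (-(α*t)) * Real.exp (α*t) = 1 := by
            rw [← Real.exp_add]; simp
          have hy : (1 + Real.exp (-(2*α*t))) ≠ 0 := by positivity
          field_simp
          linear_combination (G t) * hx
  rw [heq] at hmain
  exact hmain
end

section
/- Let G : ℝ → ℝ be measurable and let α > 0. Assume that the function t ↦ |G(t)|/√(1 − e^{−αt}) is integrable on (0, ∞). Then the series ∑'_{n=1}^∞ (Nat.choose (2n) n / 4^n) ∫₀^∞ e^{−αnt} G(t) dt converges, and ∫₀^∞ G(t)/√(1 − e^{−αt}) dt = ∫₀^∞ G(t) dt + ∑'_{n=1}^∞ (Nat.choose (2n) n / 4^n) ∫₀^∞ e^{−αnt} G(t) dt. -/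
open MeasureTheory Real Set



noncomputable def sqc (n : ℕ) : ℝ := (Nat.centralBinom n : ℝ) / 4 ^ n

lemma sqc_nonneg (n : ℕ) : 0 ≤ sqc n := by
  unfold sqc; positivity

lemma sqc_zero : sqc 0 = 1 := by simp [sqc, Nat.centralBinom]

lemma sqc_rec (n : ℕ) : 2 * (n + 1 : ℝ) * sqc (n + 1) = (2 * n + 1) * sqc n := by
  have h := Nat.succ_mul_centralBinom_succ n
  have h' : ((n:ℝ) + 1) * (Nat.centralBinom (n+1) : ℝ)
      = 2 * (2 * (n:ℝ) + 1) * (Nat.centralBinom n : ℝ) := by exact_mod_cast h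
  have h4 : (4:ℝ) ^ n ≠ 0 := by positivity
  unfold sqc
  rw [pow_succ]
  field_simp
  linear_combination (2:ℝ) * h'

lemma sqc_le_one (n : ℕ) : sqc n ≤ 1 := by
  induction n with
  | zero => simp [sqc_zero]
  | succ n ih =>
    have hrec := sqc_rec n
    nlinarith [sqc_nonneg n, sqc_nonneg (n+1)]

noncomputable def sqf (x : ℝ) : ℝ := ∑' n, sqc n * x ^ n

lemma summable_sqc {x : ℝ} (hx : |x| < 1) : Summable (fun n => sqc n * x ^ n) := by
  apply Summable.of_norm_bounded (summable_geometric_of_lt_one (abs_nonneg x) hx)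
  intro n
  rw [norm_mul, norm_pow, Real.norm_eq_abs, Real.norm_eq_abs,
    abs_of_nonneg (sqc_nonneg n)]
  calc sqc n * |x| ^ n ≤ 1 * |x| ^ n := by
        apply mul_le_mul_of_nonneg_right (sqc_le_one n) (by positivity)
    _ = |x| ^ n := one_mul _

lemma summable_deriv_bound {r : ℝ} (hr0 : 0 ≤ r) (hr1 : r < 1) :
    Summable (fun n : ℕ => (n : ℝ) * r ^ (n - 1)) := by
  rw [← summable_nat_add_iff 1]
  have h1 : Summable (fun n : ℕ => (n : ℝ) * r ^ n) := by
    simpa using summable_pow_mul_geometric_of_norm_lt_one 1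
      (by rwa [Real.norm_eq_abs, abs_of_nonneg hr0])
  have h2 : Summable (fun n : ℕ => r ^ n) :=
    summable_geometric_of_lt_one hr0 hr1
  convert h1.add h2 using 2 with n
  · rfl
  push_cast
  ring


lemma sqf_hasDerivAt {x : ℝ} (hx : |x| < 1) :
    HasDerivAt sqf (∑' n : ℕ, sqc n * ((n : ℝ) * x ^ (n - 1))) x := by
  set r := (1 + |x|) / 2 with hr
  have hxr : |x| < r := by rw [hr]; linarith
  have hr1 : r < 1 := by rw [hr]; linarith
  have hr0 : 0 ≤ r := le_trans (abs_nonneg x) hxr.le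
  exact hasDerivAt_tsum_of_isPreconnected (summable_deriv_bound hr0 hr1)
    Metric.isOpen_ball (convex_ball (0:ℝ) r).isPreconnected
    (fun n y _ => (hasDerivAt_pow n y).const_mul (sqc n))
    (fun n y hy => by
      rw [Real.norm_eq_abs, abs_mul, abs_mul, abs_of_nonneg (sqc_nonneg n),
        Nat.abs_cast, abs_pow]
      have hyr : |y| ≤ r := by
        rw [mem_ball_zero_iff, Real.norm_eq_abs] at hy; exact hy.le
      calc sqc n * ((n:ℝ) * |y| ^ (n-1)) ≤ 1 * ((n:ℝ) * r ^ (n-1)) := by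
            apply mul_le_mul (sqc_le_one n) _ (by positivity) zero_le_one
            exact mul_le_mul_of_nonneg_left (pow_le_pow_left₀ (abs_nonneg y) hyr _) (Nat.cast_nonneg n)
        _ = (n:ℝ) * r ^ (n-1) := one_mul _)
    (mem_ball_zero_iff.mpr (by rw [norm_zero]; linarith [abs_nonneg x]))
    (summable_sqc (by rw [abs_zero]; norm_num))
    (mem_ball_zero_iff.mpr (by rwa [Real.norm_eq_abs]))


lemma summable_sqc_deriv {x : ℝ} (hx : |x| < 1) :
    Summable (fun n : ℕ => sqc n * ((n : ℝ) * x ^ (n - 1))) := by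
  apply Summable.of_norm_bounded (summable_deriv_bound (abs_nonneg x) hx)
  intro n
  rw [Real.norm_eq_abs, abs_mul, abs_mul, abs_of_nonneg (sqc_nonneg n), Nat.abs_cast, abs_pow]
  calc sqc n * ((n:ℝ) * |x| ^ (n-1)) ≤ 1 * ((n:ℝ) * |x| ^ (n-1)) :=
        mul_le_mul_of_nonneg_right (sqc_le_one n) (by positivity)
    _ = (n:ℝ) * |x| ^ (n-1) := one_mul _

lemma sqf_identity {x : ℝ} (hx : |x| < 1) :
    2 * (1 - x) * (∑' n : ℕ, sqc n * ((n : ℝ) * x ^ (n - 1))) = sqf x := by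
  have hS := summable_sqc_deriv hx
  set D := ∑' n : ℕ, sqc n * ((n : ℝ) * x ^ (n - 1)) with hDdef
  have hD : HasSum (fun n : ℕ => sqc n * ((n : ℝ) * x ^ (n - 1))) D := hS.hasSum
  have hshift : HasSum (fun n : ℕ => sqc (n+1) * (((n:ℝ)+1) * x ^ n)) D := by
    have h := (hasSum_nat_add_iff (f := fun n : ℕ => sqc n * ((n : ℝ) * x ^ (n - 1))) 1).mpr
      (by simpa using hD)
    simpa using h
  have hxD : HasSum (fun n : ℕ => (n:ℝ) * sqc n * x ^ n) (x * D) := by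
    have h := hD.mul_left x
    convert h using 1
    · rfl
    funext n
    rcases n with _ | n
    · simp
    · push_cast
      rw [pow_succ]
      ring
  have hcomb := (hshift.mul_left 2).sub (hxD.mul_left 2)
  have heq : (fun n : ℕ => 2 * (sqc (n+1) * (((n:ℝ)+1) * x ^ n)) - 2 * ((n:ℝ) * sqc n * x ^ n))
      = fun n : ℕ => sqc n * x ^ n := by
    funext n
    have h := sqc_rec n
    linear_combination x ^ n * h
  rw [heq] at hcomb
  rw [sqf, hcomb.tsum_eq]
  ring

lemma sqf_zero : sqf 0 = 1 := by
  rw [sqf, tsum_eq_single 0 (fun n hn => by simp [zero_pow hn])]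
  simp [sqc_zero]

lemma sqf_mul_self {x : ℝ} (hx0 : 0 ≤ x) (hx1 : x < 1) : sqf x * sqf x * (1 - x) = 1 := by
  have key : ∀ y ∈ Icc (0:ℝ) x, |y| < 1 := fun y hy => by
    rw [abs_of_nonneg hy.1]; exact lt_of_le_of_lt hy.2 hx1
  have hF : ∀ y : ℝ, |y| < 1 → HasDerivAt (fun z => sqf z * sqf z * (1 - z)) 0 y := by
    intro y hy
    have hd := sqf_hasDerivAt hy
    have hid := sqf_identity hy
    have h := (hd.mul hd).mul ((hasDerivAt_id y).const_sub 1)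
    simp only [id_eq] at h
    convert h using 1
    · rfl
    · rfl
    · rfl
    rw [Pi.mul_apply]
    linear_combination (-(sqf y)) * hid
  have := constant_of_has_deriv_right_zero (f := fun z => sqf z * sqf z * (1 - z)) (a := 0) (b := x)
    (fun y hy => ((hF y (key y hy)).continuousAt.continuousWithinAt))
    (fun y hy => (hF y (key y (Ico_subset_Icc_self hy))).hasDerivWithinAt)
    x (right_mem_Icc.mpr hx0)
  simpa [sqf_zero] using this

lemma hasSum_sqc_sqrt {x : ℝ} (hx0 : 0 ≤ x) (hx1 : x < 1) :
    HasSum (fun n : ℕ => sqc n * x ^ n) (1 / Real.sqrt (1 - x)) := by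
  have habs : |x| < 1 := by rwa [abs_of_nonneg hx0]
  have hs := summable_sqc habs
  have hval : sqf x = 1 / Real.sqrt (1 - x) := by
    have hsq := sqf_mul_self hx0 hx1
    have h1x : (0:ℝ) < 1 - x := by linarith
    have hnn : 0 ≤ sqf x := tsum_nonneg fun n => mul_nonneg (sqc_nonneg n) (pow_nonneg hx0 n)
    have h2 : sqf x * sqf x = (1 - x)⁻¹ := by
      field_simp
      linarith [hsq]
    rw [← Real.sqrt_mul_self hnn, h2, Real.sqrt_inv, one_div]
  rw [← hval]
  exact hs.hasSum

/-- Square root series: the series `∑_{n≥1} (C(2n,n)/4^n) ∫₀^∞ e^{-αnt} G(t) dt`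
converges, and `∫₀^∞ G(t)/√(1-e^{-αt}) dt = ∫₀^∞ G(t) dt + ∑_{n≥1} (C(2n,n)/4^n) g(αn)`. -/

theorem sqrt_series_eq_integral (G : ℝ → ℝ) (hG : Measurable G) (α : ℝ) (hα : 0 < α)
    (hint : IntegrableOn (fun t => |G t| / Real.sqrt (1 - Real.exp (-(α * t)))) (Ioi 0)) :
    Summable (fun n : ℕ =>
        ((Nat.choose (2 * (n + 1)) (n + 1) : ℝ) / 4 ^ (n + 1)) *
          ∫ t in Ioi 0, Real.exp (-(α * (n + 1) * t)) * G t) ∧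
    ∫ t in Ioi 0, G t / Real.sqrt (1 - Real.exp (-(α * t)))
      = (∫ t in Ioi 0, G t) + ∑' n : ℕ,
          ((Nat.choose (2 * (n + 1)) (n + 1) : ℝ) / 4 ^ (n + 1)) *
            ∫ t in Ioi 0, Real.exp (-(α * (n + 1) * t)) * G t := by
  -- basic facts about x t = exp (-(α t))
  have hx0 : ∀ t : ℝ, 0 < Real.exp (-(α * t)) := fun t => Real.exp_pos _
  have hx1 : ∀ t ∈ Ioi (0:ℝ), Real.exp (-(α * t)) < 1 := fun t ht => by
    rw [Real.exp_lt_one_iff]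
    have : 0 < α * t := mul_pos hα ht
    linarith
  have hs_pos : ∀ t ∈ Ioi (0:ℝ), 0 < Real.sqrt (1 - Real.exp (-(α * t))) := fun t ht =>
    Real.sqrt_pos.mpr (by linarith [hx1 t ht])
  have hs_le : ∀ t : ℝ, Real.sqrt (1 - Real.exp (-(α * t))) ≤ 1 := fun t => by
    rw [show (1:ℝ) = Real.sqrt 1 by simp]
    exact Real.sqrt_le_sqrt (by rw [Real.sqrt_one]; linarith [(hx0 t).le])
  have hpow : ∀ (n : ℕ) (t : ℝ), Real.exp (-(α * n * t)) = (Real.exp (-(α * t))) ^ n := by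
    intro n t
    rw [← Real.exp_nat_mul]
    congr 1
    ring
  -- G is integrable on Ioi 0
  have hGint : IntegrableOn G (Ioi 0) := by
    apply Integrable.mono hint hG.aestronglyMeasurable
    rw [ae_restrict_iff' measurableSet_Ioi]
    filter_upwards with t ht
    have h1 := hs_pos t ht
    have h2 := hs_le t
    rw [Real.norm_eq_abs, Real.norm_eq_abs, abs_div, abs_of_nonneg (abs_nonneg (G t)),
      abs_of_nonneg (Real.sqrt_nonneg _)]
    rw [le_div_iff₀ h1]
    exact mul_le_of_le_one_right (abs_nonneg _) h2
  -- the family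
  set F : ℕ → ℝ → ℝ := fun n t => sqc n * (Real.exp (-(α * n * t)) * G t) with hF
  have hFmeas : ∀ n, Measurable (F n) := by
    intro n
    apply measurable_const.mul
    exact ((measurable_const.mul measurable_id).neg.exp).mul hG
  have hFbound : ∀ n, ∀ t ∈ Ioi (0:ℝ), ‖F n t‖ ≤ ‖G t‖ := by
    intro n t ht
    simp only [hF, Real.norm_eq_abs, abs_mul, abs_of_nonneg (sqc_nonneg n),
      abs_of_nonneg (Real.exp_pos (-(α * (n:ℝ) * t))).le]
    have he1 : Real.exp (-(α * n * t)) ≤ 1 := by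
      rw [Real.exp_le_one_iff]
      have : (0:ℝ) ≤ α * n * t :=
        mul_nonneg (mul_nonneg hα.le (Nat.cast_nonneg n)) (le_of_lt ht)
      linarith
    calc sqc n * (Real.exp (-(α * n * t)) * |G t|)
        ≤ 1 * (1 * |G t|) := by
          apply mul_le_mul (sqc_le_one n) _ (by positivity) zero_le_one
          exact mul_le_mul_of_nonneg_right he1 (abs_nonneg _)
      _ = |G t| := by ring
  have hFint : ∀ n, IntegrableOn (F n) (Ioi 0) := by
    intro n
    apply Integrable.mono hGint (hFmeas n).aestronglyMeasurable
    rw [ae_restrict_iff' measurableSet_Ioi]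
    filter_upwards with t ht
    exact hFbound n t ht
  -- pointwise HasSum for |F|
  have hptwise : ∀ t ∈ Ioi (0:ℝ),
      HasSum (fun n => ‖F n t‖) (|G t| / Real.sqrt (1 - Real.exp (-(α * t)))) := by
    intro t ht
    have h := (hasSum_sqc_sqrt (hx0 t).le (hx1 t ht)).mul_right |G t|
    have : (fun n : ℕ => sqc n * Real.exp (-(α * t)) ^ n * |G t|) = fun n => ‖F n t‖ := by
      funext n
      rw [hF, Real.norm_eq_abs, abs_mul, abs_mul, abs_of_nonneg (sqc_nonneg n),
        abs_of_nonneg (Real.exp_pos _).le, hpow, mul_assoc]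
    rw [this] at h
    convert h using 1
    · rfl
    rw [div_eq_mul_inv, one_div, mul_comm]
  -- summability of the integrals of norms
  have hInn : ∀ n, 0 ≤ ∫ t in Ioi 0, ‖F n t‖ := fun n =>
    integral_nonneg fun t => norm_nonneg _
  have hsumI : Summable (fun n => ∫ t in Ioi 0, ‖F n t‖) := by
    have h1 : ∀ n : ℕ, ENNReal.ofReal (∫ t in Ioi 0, ‖F n t‖)
        = ∫⁻ t in Ioi 0, ENNReal.ofReal ‖F n t‖ :=
      fun n => ofReal_integral_eq_lintegral_ofReal (hFint n).norm
        (Filter.Eventually.of_forall fun t => norm_nonneg _)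
    have h2 : ∑' n, ∫⁻ t in Ioi 0, ENNReal.ofReal ‖F n t‖
        = ∫⁻ t in Ioi 0, ∑' n, ENNReal.ofReal ‖F n t‖ :=
      (lintegral_tsum fun n => ((hFmeas n).norm.ennreal_ofReal).aemeasurable).symm
    have h3 : ∫⁻ t in Ioi 0, ∑' n, ENNReal.ofReal ‖F n t‖
        = ∫⁻ t in Ioi 0, ENNReal.ofReal (|G t| / Real.sqrt (1 - Real.exp (-(α * t)))) := by
      apply setLIntegral_congr_fun measurableSet_Ioi
      intro t ht
      dsimp only
      rw [← ENNReal.ofReal_tsum_of_nonneg (fun n => norm_nonneg _) (hptwise t ht).summable,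
        (hptwise t ht).tsum_eq]
    have h4 : ∫⁻ t in Ioi 0, ENNReal.ofReal (|G t| / Real.sqrt (1 - Real.exp (-(α * t)))) < ⊤ := by
      have := hint.2
      rw [hasFiniteIntegral_iff_norm] at this
      refine lt_of_le_of_lt (le_of_eq ?_) this
      congr 1
      funext t
      rw [Real.norm_eq_abs, abs_of_nonneg (div_nonneg (abs_nonneg _) (Real.sqrt_nonneg _))]
    have hne : ∑' n, ENNReal.ofReal (∫ t in Ioi 0, ‖F n t‖) ≠ ⊤ := by
      simp_rw [h1]
      rw [h2, h3]
      exact h4.ne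
    have hsum := ENNReal.summable_toReal hne
    have heq : (fun n : ℕ => (ENNReal.ofReal (∫ t in Ioi 0, ‖F n t‖)).toReal)
        = fun n => ∫ t in Ioi 0, ‖F n t‖ := funext fun n => ENNReal.toReal_ofReal (hInn n)
    rwa [heq] at hsum
  -- apply the interchange theorem
  have hHS := hasSum_integral_of_summable_integral_norm (μ := volume.restrict (Ioi 0))
    hFint hsumI
  have hval : ∫ t in Ioi 0, ∑' n, F n t
      = ∫ t in Ioi 0, G t / Real.sqrt (1 - Real.exp (-(α * t))) := by
    apply setIntegral_congr_fun measurableSet_Ioi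
    intro t ht
    have h := (hasSum_sqc_sqrt (hx0 t).le (hx1 t ht)).mul_right (G t)
    have heq : (fun n : ℕ => sqc n * Real.exp (-(α * t)) ^ n * (G t)) = fun n => F n t := by
      funext n
      simp only [hF]
      rw [hpow, mul_assoc]
    rw [heq] at h
    dsimp only
    rw [h.tsum_eq]
    ring
  rw [hval] at hHS
  -- rewrite the summand
  have hJ : ∀ n : ℕ, ∫ t in Ioi 0, F n t
      = sqc n * ∫ t in Ioi 0, Real.exp (-(α * n * t)) * G t := fun n =>
    integral_const_mul _ _
  set J : ℕ → ℝ := fun n => sqc n * ∫ t in Ioi 0, Real.exp (-(α * n * t)) * G t with hJdef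
  have hHS' : HasSum J (∫ t in Ioi 0, G t / Real.sqrt (1 - Real.exp (-(α * t)))) := by
    convert hHS using 1
    · rfl
    funext n
    rw [hJ]
  have hJ0 : J 0 = ∫ t in Ioi 0, G t := by
    simp [hJdef, sqc_zero]
  have htarget : (fun n : ℕ =>
      ((Nat.choose (2 * (n + 1)) (n + 1) : ℝ) / 4 ^ (n + 1)) *
        ∫ t in Ioi 0, Real.exp (-(α * (n + 1) * t)) * G t) = fun n => J (n + 1) := by
    funext n
    have hcoef : ((Nat.choose (2 * (n + 1)) (n + 1) : ℝ) / 4 ^ (n + 1)) = sqc (n + 1) := by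
      unfold sqc
      rw [Nat.centralBinom_eq_two_mul_choose]
    simp only [hJdef]
    push_cast
    rw [hcoef]
  constructor
  · rw [htarget]
    exact (summable_nat_add_iff 1).mpr hHS'.summable
  · rw [htarget, ← hHS'.tsum_eq, Summable.tsum_eq_zero_add hHS'.summable, hJ0]
end

section
/- Let G : ℝ → ℝ be integrable on (0, ∞) and let α > 0. Then the series ∑'_{k=1}^∞ ((−1)^k/k!) ∫₀^∞ e^{−αkt} G(t) dt converges, and ∫₀^∞ G(t) · exp(−e^{−αt}) dt = ∫₀^∞ G(t) dt + ∑'_{k=1}^∞ ((−1)^k/k!) ∫₀^∞ e^{−αkt} G(t) dt. -/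
open MeasureTheory Real Set

/-- Negative exponential series: the series `∑_{k≥1} ((-1)^k/k!) ∫₀^∞ e^{-αkt} G(t) dt`
converges, and `∫₀^∞ G(t) exp(-e^{-αt}) dt = ∫₀^∞ G(t) dt + ∑_{k≥1} ((-1)^k/k!) g(αk)`. -/
theorem neg_exp_series_eq_integral (G : ℝ → ℝ) (hG : IntegrableOn G (Ioi 0)) (α : ℝ)
    (hα : 0 < α) :
    Summable (fun k : ℕ =>
        ((-1 : ℝ) ^ (k + 1) / (Nat.factorial (k + 1) : ℝ)) *
          ∫ t in Ioi 0, Real.exp (-(α * (k + 1) * t)) * G t) ∧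
    ∫ t in Ioi 0, G t * Real.exp (-Real.exp (-(α * t)))
      = (∫ t in Ioi 0, G t) + ∑' k : ℕ,
          ((-1 : ℝ) ^ (k + 1) / (Nat.factorial (k + 1) : ℝ)) *
            ∫ t in Ioi 0, Real.exp (-(α * (k + 1) * t)) * G t := by
  set μ := volume.restrict (Ioi (0:ℝ)) with hμ
  set F : ℕ → ℝ → ℝ := fun k t =>
    ((-1 : ℝ) ^ (k + 1) / (Nat.factorial (k + 1) : ℝ)) *
      (Real.exp (-(α * (k + 1) * t)) * G t) with hF
  -- integrability of each exp * G
  have hIexp : ∀ k : ℕ, Integrable (fun t => Real.exp (-(α * (k + 1) * t)) * G t) μ := by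
    intro k
    apply Integrable.mono hG
      ((Real.continuous_exp.comp (by fun_prop)).aestronglyMeasurable.mul hG.1)
    refine (ae_restrict_iff' measurableSet_Ioi).2 (ae_of_all _ fun t ht => ?_)
    simp only [Pi.mul_apply, Function.comp_apply]
    rw [norm_mul, Real.norm_eq_abs, abs_of_pos (Real.exp_pos _)]
    have h1 : Real.exp (-(α * (↑k + 1) * t)) ≤ 1 := by
      rw [Real.exp_le_one_iff, neg_nonpos]
      have ht' : (0:ℝ) < t := ht
      positivity
    calc Real.exp (-(α * (↑k + 1) * t)) * ‖G t‖ ≤ 1 * ‖G t‖ :=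
          mul_le_mul_of_nonneg_right h1 (norm_nonneg _)
      _ = ‖G t‖ := one_mul _
  have hIF : ∀ k : ℕ, Integrable (F k) μ := fun k => ((hIexp k).const_mul _)
  -- norm bound on integrals
  have hC : ∀ k : ℕ, ∫ t, ‖F k t‖ ∂μ ≤ (1 / (Nat.factorial (k+1) : ℝ)) * ∫ t, ‖G t‖ ∂μ := by
    intro k
    rw [← integral_const_mul]
    apply integral_mono_of_nonneg (ae_of_all _ fun t => norm_nonneg _)
      (hG.norm.const_mul _)
    refine (ae_restrict_iff' measurableSet_Ioi).2 (ae_of_all _ fun t ht => ?_)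
    rw [hF]
    simp only [norm_mul, Real.norm_eq_abs]
    rw [abs_div, abs_pow, abs_neg, abs_one, one_pow, abs_of_pos (Real.exp_pos _),
      Nat.abs_cast]
    have h1 : Real.exp (-(α * (↑k + 1) * t)) ≤ 1 := by
      rw [Real.exp_le_one_iff, neg_nonpos]
      have : (0:ℝ) < t := ht
      positivity
    have hfac : (0:ℝ) < (Nat.factorial (k+1) : ℝ) := by positivity
    calc 1 / (Nat.factorial (k+1) : ℝ) * (Real.exp (-(α * (↑k + 1) * t)) * |G t|)
        ≤ 1 / (Nat.factorial (k+1) : ℝ) * (1 * |G t|) := by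
          apply mul_le_mul_of_nonneg_left
            (mul_le_mul_of_nonneg_right h1 (abs_nonneg _)) (by positivity)
      _ = 1 / (Nat.factorial (k+1) : ℝ) * |G t| := by ring
  have hmaj : Summable fun k : ℕ => (1 / (Nat.factorial (k+1) : ℝ)) * ∫ t, ‖G t‖ ∂μ := by
    apply Summable.mul_right
    have := Real.summable_pow_div_factorial 1
    simpa using ((summable_nat_add_iff 1).2 this)
  have hnorm : Summable fun k : ℕ => ∫ t, ‖F k t‖ ∂μ :=
    hmaj.of_nonneg_of_le (fun k => integral_nonneg fun t => norm_nonneg _) hC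
  -- summability of integrals
  have hswap := integral_tsum_of_summable_integral_norm hIF hnorm
  have hSummInt : Summable fun k : ℕ => ∫ t, F k t ∂μ :=
    hnorm.of_norm_bounded fun k => norm_integral_le_integral_norm _
  have hSummInt' : Summable (fun k : ℕ =>
      ((-1 : ℝ) ^ (k + 1) / (Nat.factorial (k + 1) : ℝ)) *
        ∫ t in Ioi 0, Real.exp (-(α * (k + 1) * t)) * G t) := by
    have : ∀ k : ℕ, (∫ t, F k t ∂μ) =
        ((-1 : ℝ) ^ (k + 1) / (Nat.factorial (k + 1) : ℝ)) *
          ∫ t in Ioi 0, Real.exp (-(α * (k + 1) * t)) * G t := fun k => integral_const_mul _ _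
    rw [← funext this]
    exact hSummInt
  refine ⟨hSummInt', ?_⟩
  -- pointwise identity
  have hpt : ∀ t : ℝ, G t * Real.exp (-Real.exp (-(α * t))) = G t + ∑' k : ℕ, F k t := by
    intro t
    set y := Real.exp (-(α * t)) with hy
    have hsum : Summable fun n : ℕ => G t * ((-y) ^ n / n.factorial) :=
      (Real.summable_pow_div_factorial (-y)).mul_left _
    have h1 : Real.exp (-y) = ∑' n : ℕ, (-y) ^ n / n.factorial := by
      rw [Real.exp_eq_exp_ℝ, NormedSpace.exp_eq_tsum_div]
    rw [h1, tsum_mul_left.symm, Summable.tsum_eq_zero_add hsum]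
    simp only [pow_zero, Nat.factorial_zero, Nat.cast_one, div_one, mul_one]
    congr 1
    apply tsum_congr
    intro k
    have hyk : y ^ (k + 1) = Real.exp (-(α * (k + 1) * t)) := by
      rw [hy, ← Real.exp_nat_mul]
      push_cast
      ring_nf
    rw [neg_pow, hF]
    simp only
    rw [show ((-1:ℝ)^(k+1) * y^(k+1)) = (-1:ℝ)^(k+1) * Real.exp (-(α * (↑k + 1) * t))
      from by rw [hyk]]
    ring
  -- LHS integrable
  have hL : Integrable (fun t => G t * Real.exp (-Real.exp (-(α * t)))) μ := by
    apply Integrable.mono hG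
      (hG.1.mul (Real.continuous_exp.comp (by fun_prop)).aestronglyMeasurable)
    refine ae_of_all _ fun t => ?_
    simp only [Pi.mul_apply, Function.comp_apply]
    rw [norm_mul]
    have h1 : ‖Real.exp (-Real.exp (-(α * t)))‖ ≤ 1 := by
      rw [Real.norm_eq_abs, abs_of_pos (Real.exp_pos _), Real.exp_le_one_iff, neg_nonpos]
      exact (Real.exp_pos _).le
    calc ‖G t‖ * ‖Real.exp (-Real.exp (-(α * t)))‖ ≤ ‖G t‖ * 1 :=
          mul_le_mul_of_nonneg_left h1 (norm_nonneg _)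
      _ = ‖G t‖ := mul_one _
  -- tsum function integrable as difference
  have htsumInt : Integrable (fun t => ∑' k : ℕ, F k t) μ := by
    have : (fun t => ∑' k : ℕ, F k t) =
        fun t => G t * Real.exp (-Real.exp (-(α * t))) - G t := by
      funext t; rw [hpt t]; ring
    rw [this]
    exact hL.sub hG
  calc ∫ t in Ioi 0, G t * Real.exp (-Real.exp (-(α * t)))
      = ∫ t, (G t + ∑' k : ℕ, F k t) ∂μ := by
        rw [hμ]; exact integral_congr_ae (ae_of_all _ hpt)
    _ = (∫ t, G t ∂μ) + ∫ t, (∑' k : ℕ, F k t) ∂μ := integral_add hG htsumInt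
    _ = (∫ t in Ioi 0, G t) + ∑' k : ℕ, ∫ t, F k t ∂μ := by rw [← hswap]
    _ = (∫ t in Ioi 0, G t) + ∑' k : ℕ,
          ((-1 : ℝ) ^ (k + 1) / (Nat.factorial (k + 1) : ℝ)) *
            ∫ t in Ioi 0, Real.exp (-(α * (k + 1) * t)) * G t := by
        congr 1
        apply tsum_congr
        intro k
        rw [hF, hμ]
        exact integral_const_mul _ _
end

section
/- Let a, β ∈ ℂ with |a| < 1 and Re(β) > 1. Then ∑'_{k=1}^∞ (a + k)^{−β} = ∑'_{n=0}^∞ (−1)^n a^n Γ(β + n) ζ(β + n) / (n! · Γ(β)), where both series converge absolutely, (a+k)^{−β} denotes the complex power, Γ is the complex Gamma function and ζ is the Riemann zeta function. -/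
open Complex Filter Finset

noncomputable def binP (β : ℂ) (n : ℕ) : ℂ := ∏ j ∈ Finset.range n, (-β - j)

lemma binP_succ (β : ℂ) (n : ℕ) : binP β (n+1) = binP β n * (-β - n) := by
  simp [binP, Finset.prod_range_succ]

lemma mem_slit_of_abs_lt_one {z : ℂ} (hz : ‖z‖ < 1) :
    (1 + z) ∈ Complex.slitPlane := by
  refine Or.inl ?_
  have h1 : |z.re| ≤ ‖z‖ := Complex.abs_re_le_norm z
  have := abs_le.mp h1
  simp only [Complex.add_re, Complex.one_re]
  linarith

lemma iterDeriv_cpow (β : ℂ) (n : ℕ) {z : ℂ} (hz : (1 + z) ∈ Complex.slitPlane) :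
    iteratedDeriv n (fun w : ℂ => (1 + w) ^ (-β)) z = binP β n * (1 + z) ^ (-β - n) := by
  induction n generalizing z with
  | zero => simp [binP]
  | succ n ih =>
    rw [iteratedDeriv_succ]
    have hU : IsOpen {w : ℂ | (1 + w) ∈ Complex.slitPlane} :=
      Complex.isOpen_slitPlane.preimage (by continuity)
    have hev : iteratedDeriv n (fun w : ℂ => (1 + w) ^ (-β)) =ᶠ[nhds z]
        fun w => binP β n * (1 + w) ^ (-β - n) := by
      filter_upwards [hU.mem_nhds hz] with w hw
      exact ih hw
    rw [hev.deriv_eq]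
    have hd : HasDerivAt (fun w : ℂ => (1 + w) ^ (-β - n))
        ((-β - n) * (1 + z) ^ (-β - n - 1) * 1) z :=
      ((hasDerivAt_id z).const_add 1).cpow_const hz
    rw [((hd.const_mul (binP β n))).deriv]
    rw [binP_succ]
    push_cast
    ring_nf

lemma hasSum_binomial (β : ℂ) {z : ℂ} (hz : ‖z‖ < 1) :
    HasSum (fun n : ℕ => binP β n / n.factorial * z ^ n) ((1 + z) ^ (-β)) := by
  have hdiff : DifferentiableOn ℂ (fun w : ℂ => (1 + w) ^ (-β)) (Metric.ball 0 1) := by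
    intro w hw
    have hw' : ‖w‖ < 1 := by simpa [Complex.dist_eq] using hw
    exact (((differentiableAt_const (1:ℂ)).add differentiableAt_id).cpow
      (differentiableAt_const _) (mem_slit_of_abs_lt_one hw')).differentiableWithinAt
  have hz' : z ∈ Metric.ball (0:ℂ) 1 := by simpa [Complex.dist_eq] using hz
  have H := Complex.hasSum_taylorSeries_on_ball hdiff hz'
  have h0 : (0:ℂ) ∈ Metric.ball (0:ℂ) 1 := by simp
  convert H using 2 with n
  · rfl
  rw [iterDeriv_cpow β n (by simpa using mem_slit_of_abs_lt_one (by simp : ‖(0:ℂ)‖ < 1))]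
  simp [Complex.one_cpow, smul_eq_mul]
  ring

lemma summable_norm_binomial (β : ℂ) {z : ℂ} (hz : ‖z‖ < 1) :
    Summable (fun n : ℕ => ‖binP β n / n.factorial * z ^ n‖) := by
  set r : ℝ := (1 + ‖z‖) / 2 with hr
  have hr1 : r < 1 := by rw [hr]; linarith
  have hzr : ‖z‖ < r := by rw [hr]; linarith
  refine summable_of_ratio_norm_eventually_le hr1 ?_
  have htend : Tendsto (fun n : ℕ => ‖z‖ * (1 + (‖β‖ - 1) / (n + 1)))
      atTop (nhds (‖z‖)) := by
    have h1 : Tendsto (fun n : ℕ => (‖β‖ - 1) / ((n:ℝ) + 1)) atTop (nhds 0) := by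
      have := (tendsto_const_div_atTop_nhds_zero_nat (‖β‖ - 1)).comp
        (tendsto_add_atTop_nat 1)
      refine this.congr fun n => ?_
      simp only [Function.comp]
      push_cast
      ring
    have := ((tendsto_const_nhds (x := (1:ℝ))).add h1).const_mul (‖z‖)
    simpa using this
  filter_upwards [htend.eventually_lt_const hzr] with n hn
  have hfac : ((n+1).factorial : ℝ) = (n.factorial : ℝ) * (n + 1) := by
    rw [Nat.factorial_succ]; push_cast; ring
  have hnorm : ‖binP β (n+1) / (n+1).factorial * z ^ (n+1)‖
      = ‖binP β n / n.factorial * z ^ n‖ * (‖β + n‖ * ‖z‖ / (n + 1)) := by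
    rw [binP_succ]
    have h1 : (-β - (n:ℂ)) = -(β + n) := by ring
    simp only [norm_mul, norm_div, norm_pow, h1, norm_neg]
    rw [Complex.norm_natCast, Complex.norm_natCast, hfac]
    have hn1 : (0:ℝ) < (n:ℝ) + 1 := by positivity
    rw [pow_succ]
    field_simp
    all_goals first | ring | exact Or.inl trivial
  rw [Real.norm_eq_abs, Real.norm_eq_abs, _root_.abs_of_nonneg (norm_nonneg _),
    _root_.abs_of_nonneg (norm_nonneg _), hnorm]
  have hb : ‖β + n‖ ≤ ‖β‖ + n := by
    calc ‖β + n‖ ≤ ‖β‖ + ‖(n:ℂ)‖ := norm_add_le _ _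
    _ = ‖β‖ + n := by rw [Complex.norm_natCast]
  have hkey : ‖β + n‖ * ‖z‖ / (n + 1) ≤ r := by
    have h2 : ‖z‖ * (1 + (‖β‖ - 1) / (n + 1))
        = ‖z‖ * ((‖β‖ + n) / (n + 1)) := by
      have hn1 : ((n:ℝ) + 1) ≠ 0 := by positivity
      rw [mul_eq_mul_left_iff]
      left
      rw [add_div' _ _ _ hn1, div_eq_div_iff hn1 hn1]
      ring
    have h3 := hn.le
    rw [h2] at h3
    calc ‖β + n‖ * ‖z‖ / (n + 1)
        ≤ (‖β‖ + n) * ‖z‖ / (n + 1) := by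
          gcongr
      _ = ‖z‖ * ((‖β‖ + n) / (n + 1)) := by ring
      _ ≤ r := h3
  calc ‖binP β n / n.factorial * z ^ n‖ * (‖β + n‖ * ‖z‖ / (n + 1))
      ≤ ‖binP β n / n.factorial * z ^ n‖ * r := by
        refine mul_le_mul_of_nonneg_left hkey (norm_nonneg _)
    _ = r * ‖binP β n / n.factorial * z ^ n‖ := by ring
  -- need : ‖·‖ ≤ r * ‖·‖  — the statement is about real-valued function norms

lemma my_mul_cpow {r : ℝ} (hr : 0 < r) {z : ℂ} (hz : z ≠ 0) (s : ℂ) :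
    ((r : ℂ) * z) ^ s = (r : ℂ) ^ s * z ^ s := by
  have hr0 : (r : ℂ) ≠ 0 := Complex.ofReal_ne_zero.mpr hr.ne'
  rw [Complex.cpow_def_of_ne_zero (mul_ne_zero hr0 hz),
    Complex.cpow_def_of_ne_zero hr0, Complex.cpow_def_of_ne_zero hz,
    Complex.log_ofReal_mul hr hz, ← Complex.exp_add, ← add_mul,
    Complex.ofReal_log hr.le]

lemma Gamma_add_nat (β : ℂ) (hβ : 0 < β.re) (n : ℕ) :
    Complex.Gamma (β + n) = Complex.Gamma β * ∏ j ∈ Finset.range n, (β + j) := by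
  induction n with
  | zero => simp
  | succ n ih =>
    have hne : β + n ≠ 0 := by
      intro h
      have := congrArg Complex.re h
      simp only [Complex.add_re, Complex.natCast_re, Complex.zero_re] at this
      have : β.re = -n := by linarith
      have hn : (0:ℝ) ≤ n := Nat.cast_nonneg n
      linarith
    have h1 : β + ((n+1 : ℕ) : ℂ) = (β + n) + 1 := by push_cast; ring
    rw [h1, Complex.Gamma_add_one _ hne, ih, Finset.prod_range_succ]
    ring

lemma binP_eq_Gamma (β : ℂ) (hβ : 0 < β.re) (hΓ : Complex.Gamma β ≠ 0) (n : ℕ) :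
    binP β n = (-1) ^ n * Complex.Gamma (β + n) / Complex.Gamma β := by
  rw [Gamma_add_nat β hβ n]
  have : binP β n = (-1 : ℂ) ^ n * ∏ j ∈ Finset.range n, (β + j) := by
    calc binP β n = ∏ j ∈ Finset.range n, ((-1) * (β + j)) :=
          Finset.prod_congr rfl fun j _ => by ring
      _ = _ := by rw [Finset.prod_mul_distrib, Finset.prod_const, Finset.card_range]
  rw [this]
  field_simp

/-- Converting a fractional series to a power series: for `|a| < 1` and `Re β > 1`,
`∑_{k≥1} (a + k)^{-β} = ∑_{n≥0} (-1)^n a^n Γ(β+n) ζ(β+n) / (n! Γ(β))`,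
both series converging absolutely. -/
theorem fractional_series_eq_power_series (a β : ℂ) (ha : ‖a‖ < 1)
    (hβ : 1 < β.re) :
    Summable (fun k : ℕ => ‖(a + ((k : ℂ) + 1)) ^ (-β)‖) ∧
    Summable (fun n : ℕ => ‖(-1 : ℂ) ^ n * a ^ n * Complex.Gamma (β + n) *
        riemannZeta (β + n) / ((Nat.factorial n : ℂ) * Complex.Gamma β)‖) ∧
    ∑' k : ℕ, (a + ((k : ℂ) + 1)) ^ (-β)
      = ∑' n : ℕ, (-1 : ℂ) ^ n * a ^ n * Complex.Gamma (β + n) *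
          riemannZeta (β + n) / ((Nat.factorial n : ℂ) * Complex.Gamma β) := by
  have hβ0 : 0 < β.re := by linarith
  have hΓ : Complex.Gamma β ≠ 0 := by
    refine Complex.Gamma_ne_zero fun m => ?_
    intro h
    have := congrArg Complex.re h
    simp only [Complex.neg_re, Complex.natCast_re] at this
    have hm : (0:ℝ) ≤ (m:ℝ) := Nat.cast_nonneg m
    linarith
  -- the double-indexed family
  set F : ℕ × ℕ → ℂ := fun p =>
    binP β p.1 / p.1.factorial * a ^ p.1 * ((p.2 : ℂ) + 1) ^ (-(β + p.1)) with hF_def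
  have hK0 : ∀ k : ℕ, ((k : ℂ) + 1) ≠ 0 := by
    intro k
    intro h
    have := congrArg Complex.re h
    simp only [Complex.add_re, Complex.natCast_re, Complex.one_re, Complex.zero_re] at this
    have : (0:ℝ) ≤ (k:ℝ) := Nat.cast_nonneg k
    linarith
  have habs : ∀ k : ℕ, ‖(k : ℂ) + 1‖ = (k : ℝ) + 1 := by
    intro k
    rw [show ((k:ℂ) + 1) = (((k:ℝ) + 1 : ℝ) : ℂ) by push_cast; ring, Complex.norm_real, Real.norm_eq_abs,
      abs_of_pos (by positivity)]
  -- norm bound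
  have hFnorm_eq : ∀ p : ℕ × ℕ, ‖F p‖
      = ‖binP β p.1 / p.1.factorial * a ^ p.1‖ * ((p.2 : ℝ) + 1) ^ (-(β.re + p.1)) := by
    rintro ⟨n, k⟩
    have hcp : ‖((k:ℂ) + 1) ^ (-(β + (n:ℂ)))‖ = ((k:ℝ) + 1) ^ (-(β.re + (n:ℝ))) := by
      rw [show ((k:ℂ) + 1) = (((k:ℝ) + 1 : ℝ) : ℂ) by push_cast; ring,
        Complex.norm_cpow_eq_rpow_re_of_pos (by positivity)]
      norm_num [Complex.neg_re, Complex.add_re, Complex.natCast_re]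
    simp only [hF_def, norm_mul, hcp]
    try ring
  have hFnorm : Summable fun p : ℕ × ℕ => ‖F p‖ := by
    have hg : Summable fun n : ℕ => ‖binP β n / n.factorial * a ^ n‖ :=
      summable_norm_binomial β ha
    have hh : Summable fun k : ℕ => ((k : ℝ) + 1) ^ (-β.re) := by
      have h1 : Summable fun n : ℕ => (n : ℝ) ^ (-β.re) :=
        Real.summable_nat_rpow.mpr (by linarith)
      have h2 := (summable_nat_add_iff 1).mpr h1
      refine h2.congr fun k => ?_
      push_cast
      rfl
    have hprod := hg.mul_of_nonneg hh (fun n => norm_nonneg _)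
      (fun k => Real.rpow_nonneg (by positivity) _)
    refine Summable.of_nonneg_of_le (fun p => norm_nonneg _) (fun p => ?_) hprod
    rw [hFnorm_eq p]
    refine mul_le_mul_of_nonneg_left ?_ (norm_nonneg _)
    refine Real.rpow_le_rpow_of_exponent_le
      (by have : (0:ℝ) ≤ (p.2:ℝ) := Nat.cast_nonneg p.2; linarith) ?_
    have : (0:ℝ) ≤ (p.1 : ℝ) := Nat.cast_nonneg p.1
    linarith
  have hF : Summable F := hFnorm.of_norm
  -- row sums
  have hrow : ∀ k : ℕ, HasSum (fun n => F (n, k)) ((a + ((k : ℂ) + 1)) ^ (-β)) := by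
    intro k
    set z : ℂ := a / ((k : ℂ) + 1) with hz_def
    have hzlt : ‖z‖ < 1 := by
      rw [hz_def, norm_div, habs k]
      have h1 : ‖a‖ / ((k:ℝ) + 1) ≤ ‖a‖ :=
        div_le_self (norm_nonneg a)
          (by have : (0:ℝ) ≤ (k:ℝ) := Nat.cast_nonneg k; linarith)
      linarith
    have h1 := hasSum_binomial β hzlt
    have h2 := h1.mul_right (((k : ℂ) + 1) ^ (-β))
    have hz1 : (1 + z) ≠ 0 := by
      intro h
      have : z = -1 := by linear_combination h
      rw [this] at hzlt
      simp at hzlt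
    have hsum_eq : (1 + z) ^ (-β) * ((k : ℂ) + 1) ^ (-β) = (a + ((k : ℂ) + 1)) ^ (-β) := by
      have hmul : a + ((k : ℂ) + 1) = ((((k:ℝ) + 1 : ℝ)) : ℂ) * (1 + z) := by
        rw [show ((((k:ℝ) + 1 : ℝ)) : ℂ) = (k:ℂ) + 1 by push_cast; ring, hz_def, mul_add,
          mul_one, mul_div_cancel₀ _ (hK0 k)]
        ring
      rw [hmul, my_mul_cpow (by positivity : (0:ℝ) < (k:ℝ) + 1) hz1]
      rw [show ((((k:ℝ) + 1 : ℝ)) : ℂ) = (k:ℂ) + 1 by push_cast; ring]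
      ring
    rw [← hsum_eq]
    refine h2.congr_fun fun n => ?_
    simp only [hF_def]
    have hKn : ((k:ℂ) + 1) ^ (-(n:ℂ)) = (((k:ℂ) + 1) ^ n)⁻¹ := by
      rw [Complex.cpow_neg, Complex.cpow_natCast]
    rw [show -(β + (n:ℂ)) = -β + -(n:ℂ) by ring, Complex.cpow_add _ _ (hK0 k), hKn,
      hz_def, div_pow]
    field_simp
  -- column sums
  have hcol_summable : ∀ n : ℕ, Summable fun k => F (n, k) := fun n => hF.prod_factor n
  have hzeta : ∀ n : ℕ, ∑' k : ℕ, F (n, k)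
      = binP β n / n.factorial * a ^ n * riemannZeta (β + n) := by
    intro n
    have hre : 1 < (β + (n:ℂ)).re := by
      simp only [Complex.add_re, Complex.natCast_re]
      have : (0:ℝ) ≤ (n:ℝ) := Nat.cast_nonneg n
      linarith
    rw [zeta_eq_tsum_one_div_nat_add_one_cpow hre]
    rw [← tsum_mul_left]
    refine tsum_congr fun k => ?_
    simp only [hF_def]
    rw [Complex.cpow_neg, one_div]
  -- the key identity for target terms
  have hterm : ∀ n : ℕ, binP β n / n.factorial * a ^ n * riemannZeta (β + n)
      = (-1 : ℂ) ^ n * a ^ n * Complex.Gamma (β + n) *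
          riemannZeta (β + n) / ((Nat.factorial n : ℂ) * Complex.Gamma β) := by
    intro n
    rw [binP_eq_Gamma β hβ0 hΓ n]
    have hfac : ((Nat.factorial n : ℕ) : ℂ) ≠ 0 := by
      exact_mod_cast Nat.cast_ne_zero.mpr (Nat.factorial_ne_zero n)
    field_simp
  refine ⟨?_, ?_, ?_⟩
  · -- summability of rows
    have hGsum : Summable fun k => ∑' n, ‖F (n, k)‖ := by
      have := hFnorm.prod_symm.prod
      refine this.congr fun k => ?_
      rfl
    refine Summable.of_nonneg_of_le (fun k => norm_nonneg _) (fun k => ?_) hGsum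
    rw [← (hrow k).tsum_eq]
    exact norm_tsum_le_tsum_norm (hFnorm.prod_symm.prod_factor k)
  · -- summability of columns
    have hGsum : Summable fun n => ∑' k, ‖F (n, k)‖ := hFnorm.prod
    refine Summable.of_nonneg_of_le (fun n => norm_nonneg _) (fun n => ?_) hGsum
    rw [← hterm n, ← hzeta n]
    exact norm_tsum_le_tsum_norm (hFnorm.prod_factor n)
  · calc ∑' k : ℕ, (a + ((k : ℂ) + 1)) ^ (-β)
        = ∑' (k : ℕ) (n : ℕ), F (n, k) := tsum_congr fun k => (hrow k).tsum_eq.symm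
      _ = ∑' (n : ℕ) (k : ℕ), F (n, k) := hF.tsum_comm
      _ = ∑' n : ℕ, binP β n / n.factorial * a ^ n * riemannZeta (β + n) :=
          tsum_congr fun n => hzeta n
      _ = _ := tsum_congr fun n => hterm n
end

section
/- Let α be a real number with 0 < α < 2π. Then the partial sums ∑_{k=1}^{N} sin(αk)/k converge, as N → ∞, to (π − α)/2; that is, Tendsto (fun N => ∑_{k=1}^{N} sin(αk)/k) atTop (𝓝 ((π − α)/2)). -/
open Real Filter

/-- For `0 < α < 2π`, the partial sums of `∑_{k≥1} sin(αk)/k` converge to `(π - α)/2`. -/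
theorem sin_series_partial_sums_tendsto (α : ℝ) (h1 : 0 < α) (h2 : α < 2 * π) :
    Tendsto (fun N : ℕ => ∑ k ∈ Finset.Icc 1 N, Real.sin (α * k) / k)
      atTop (nhds ((π - α) / 2)) := by
  have hα2 : 0 < α / 2 := by linarith
  have hα2' : α / 2 < π := by linarith
  have hs2 : 0 < Real.sin (α / 2) := Real.sin_pos_of_pos_of_lt_pi hα2 hα2'
  set z : ℂ := Complex.exp (α * Complex.I) with hz_def
  have hz_re : z.re = Real.cos α := Complex.exp_ofReal_mul_I_re α
  have hz_im : z.im = Real.sin α := Complex.exp_ofReal_mul_I_im α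
  have hnorm_z : ‖z‖ = 1 := Complex.norm_exp_ofReal_mul_I α
  have hcosα : Real.cos α = 1 - 2 * Real.sin (α / 2) ^ 2 := by
    have h0 := Real.cos_sq (α / 2)
    rw [show 2 * (α / 2) = α by ring] at h0
    have h' : Real.sin (α/2) ^ 2 + Real.cos (α/2) ^ 2 = 1 := Real.sin_sq_add_cos_sq (α/2)
    nlinarith
  have hsinα : Real.sin α = 2 * Real.sin (α / 2) * Real.cos (α / 2) := by
    have := Real.sin_two_mul (α / 2)
    rw [show 2 * (α / 2) = α by ring] at this
    linarith
  -- key identity : 1 - z = 2 sin(α/2) * (cos(α/2 - π/2) + sin(α/2 - π/2) I)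
  have hkey : (1 : ℂ) - z = ((2 * Real.sin (α / 2) : ℝ) : ℂ) *
      (Complex.cos ((α / 2 - π / 2 : ℝ) : ℂ) +
        Complex.sin ((α / 2 - π / 2 : ℝ) : ℂ) * Complex.I) := by
    rw [← Complex.ofReal_cos, ← Complex.ofReal_sin]
    apply Complex.ext
    · simp only [Complex.sub_re, Complex.one_re, hz_re, Complex.mul_re, Complex.ofReal_re,
        Complex.ofReal_im, Complex.add_re, Complex.add_im, Complex.mul_re, Complex.mul_im,
        Complex.I_re, Complex.I_im]
      rw [Real.cos_sub_pi_div_two, Real.sin_sub_pi_div_two]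
      rw [hcosα]; ring
    · simp only [Complex.sub_im, Complex.one_im, hz_im, Complex.mul_im, Complex.ofReal_re,
        Complex.ofReal_im, Complex.add_re, Complex.add_im, Complex.mul_re, Complex.mul_im,
        Complex.I_re, Complex.I_im]
      rw [Real.cos_sub_pi_div_two, Real.sin_sub_pi_div_two]
      rw [hsinα]; ring
  have hre_pos : 0 < ((1 : ℂ) - z).re := by
    rw [Complex.sub_re, Complex.one_re, hz_re, hcosα]
    nlinarith
  have hz_ne_one : z ≠ 1 := by
    intro h
    rw [h] at hre_pos
    simp at hre_pos
  have harg : Complex.arg (1 - z) = α / 2 - π / 2 := by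
    rw [hkey]
    exact Complex.arg_mul_cos_add_sin_mul_I (by positivity)
      ⟨by linarith [Real.pi_pos], by linarith [Real.pi_pos]⟩
  have hnorm_pos : 0 < ‖(1 : ℂ) - z‖ := by
    rw [norm_pos_iff]
    exact sub_ne_zero.mpr (fun h => hz_ne_one h.symm)
  -- Step 1: partial sums of z^k/k converge (Dirichlet test)
  have hbound : ∀ n : ℕ, ‖∑ i ∈ Finset.range n, z ^ (i + 1)‖ ≤ 2 / ‖1 - z‖ := by
    intro n
    have hmul : ∑ i ∈ Finset.range n, z ^ (i + 1) = z * ∑ i ∈ Finset.range n, z ^ i := by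
      rw [Finset.mul_sum]; exact Finset.sum_congr rfl fun i _ => by ring
    rw [hmul, norm_mul, hnorm_z, one_mul]
    rw [geom_sum_eq (fun h => hz_ne_one h), norm_div]
    have hswap : ‖z - 1‖ = ‖(1:ℂ) - z‖ := by rw [← norm_neg]; ring_nf
    rw [hswap, div_le_div_iff₀ hnorm_pos hnorm_pos]
    have hb : ‖z ^ n - 1‖ ≤ 2 := by
      calc ‖z ^ n - 1‖ ≤ ‖z ^ n‖ + ‖(1:ℂ)‖ := norm_sub_le _ _
      _ = 2 := by rw [norm_pow, hnorm_z]; norm_num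
    nlinarith
  have hanti : Antitone (fun i : ℕ => ((i : ℝ) + 1)⁻¹) := by
    intro a b hab
    apply inv_anti₀ (by positivity)
    exact_mod_cast by omega
  have htend0 : Tendsto (fun i : ℕ => ((i : ℝ) + 1)⁻¹) atTop (nhds 0) :=
    tendsto_one_div_add_atTop_nhds_zero_nat.congr (fun n => by rw [one_div])
  have hcauchy : CauchySeq fun n => ∑ i ∈ Finset.range n, ((i : ℝ) + 1)⁻¹ • z ^ (i + 1) :=
    hanti.cauchySeq_series_mul_of_tendsto_zero_of_bounded htend0 hbound
  obtain ⟨L, hL⟩ := cauchySeq_tendsto_of_complete hcauchy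
  -- partial sums S n = ∑_{i < n} z^i / i
  set S : ℕ → ℂ := fun n => ∑ i ∈ Finset.range n, z ^ i / i with hS_def
  have hS_shift : ∀ n, S (n + 1) = ∑ i ∈ Finset.range n, ((i : ℝ) + 1)⁻¹ • z ^ (i + 1) := by
    intro n
    simp only [hS_def]
    rw [Finset.sum_range_succ']
    simp only [Nat.cast_zero, pow_zero, div_zero, add_zero]
    refine Finset.sum_congr rfl fun i _ => ?_
    rw [Complex.real_smul]
    push_cast
    rw [div_eq_inv_mul]
  have hS_tendsto : Tendsto S atTop (nhds L) := by
    rw [← tendsto_add_atTop_iff_nat 1]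
    exact hL.congr fun n => (hS_shift n).symm
  -- imaginary parts
  have hz_pow_im : ∀ i : ℕ, (z ^ i).im = Real.sin (α * i) := by
    intro i
    rw [hz_def, ← Complex.exp_nat_mul,
      show (i : ℂ) * ((α : ℂ) * Complex.I) = ((α * i : ℝ) : ℂ) * Complex.I by push_cast; ring]
    exact Complex.exp_ofReal_mul_I_im _
  have him_term : ∀ i : ℕ, (z ^ i / i).im = Real.sin (α * i) / i := by
    intro i
    rw [Complex.div_natCast_im, hz_pow_im]
  have hreal : Tendsto (fun n : ℕ => ∑ i ∈ Finset.range n, Real.sin (α * i) / i)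
      atTop (nhds L.im) := by
    have h := (Complex.continuous_im.tendsto L).comp hS_tendsto
    refine h.congr fun n => ?_
    simp only [Function.comp_apply, hS_def, Complex.im_sum]
    exact Finset.sum_congr rfl fun i _ => him_term i
  -- Abel's limit theorem
  have habel := Real.tendsto_tsum_powerSeries_nhdsWithin_lt hreal
  -- identify the limit
  have hlog_tendsto : Tendsto (fun x : ℝ => (-Complex.log (1 - x * z)).im)
      (nhdsWithin 1 (Set.Iio 1)) (nhds ((π - α) / 2)) := by
    have hcont : ContinuousAt (fun x : ℝ => (-Complex.log (1 - x * z)).im) 1 := by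
      have hc1 : ContinuousAt (fun x : ℝ => 1 - (x : ℂ) * z) 1 := by fun_prop
      have hc2 : ContinuousAt (fun x : ℝ => Complex.log (1 - (x : ℂ) * z)) 1 :=
        hc1.clog (by rw [Complex.mem_slitPlane_iff]; left; simpa using hre_pos)
      exact Complex.continuous_im.continuousAt.comp hc2.neg
    have h := hcont.tendsto
    have hval : (-Complex.log (1 - ((1 : ℝ) : ℂ) * z)).im = (π - α) / 2 := by
      rw [Complex.neg_im, Complex.log_im]
      simp only [Complex.ofReal_one, one_mul]
      rw [harg]; ring
    rw [hval] at h
    exact h.mono_left nhdsWithin_le_nhds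
  have heq : ∀ᶠ x in nhdsWithin (1:ℝ) (Set.Iio 1),
      ∑' n : ℕ, (Real.sin (α * n) / n) * x ^ n = (-Complex.log (1 - x * z)).im := by
    filter_upwards [Ioo_mem_nhdsLT_of_mem (Set.mem_Ioc.mpr ⟨zero_lt_one, le_refl 1⟩)]
      with x hx
    have hxnorm : ‖(x : ℂ) * z‖ < 1 := by
      rw [norm_mul, hnorm_z, mul_one, Complex.norm_real, Real.norm_eq_abs,
        abs_of_pos hx.1]
      exact hx.2
    have hsum := Complex.hasSum_taylorSeries_neg_log hxnorm
    have him := ((Complex.hasSum_iff _ _).mp hsum).2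
    have hfinal : HasSum (fun n : ℕ => Real.sin (α * n) / n * x ^ n)
        (-Complex.log (1 - x * z)).im := by
      refine him.congr_fun fun n => ?_
      have hrw : ((x : ℂ) * z) ^ n / (n : ℂ) = ((x ^ n / n : ℝ) : ℂ) * z ^ n := by
        rcases Nat.eq_zero_or_pos n with rfl | hn
        · simp
        · push_cast; field_simp; ring
      rw [hrw, Complex.im_ofReal_mul, hz_pow_im]
      ring
    exact hfinal.tsum_eq
  have habel' := habel.congr' heq
  have hLim : L.im = (π - α) / 2 := tendsto_nhds_unique habel' hlog_tendsto
  rw [hLim] at hreal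
  -- finally convert range sums to Icc sums
  have hfinal : ∀ N : ℕ, ∑ k ∈ Finset.Icc 1 N, Real.sin (α * k) / k
      = ∑ i ∈ Finset.range (N + 1), Real.sin (α * i) / i := by
    intro N
    rw [Finset.sum_range_succ']
    simp only [Nat.cast_zero, mul_zero, Real.sin_zero, zero_div, add_zero]
    rw [show Finset.Icc 1 N = Finset.Ico 1 (N + 1) by rw [Finset.Ico_add_one_right_eq_Icc]]
    rw [Finset.sum_Ico_eq_sum_range]
    simp only [Nat.add_sub_cancel]
    exact Finset.sum_congr rfl fun i _ => by rw [Nat.add_comm 1 i]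
  have hT := (tendsto_add_atTop_iff_nat 1).mpr hreal
  exact hT.congr fun N => (hfinal N).symm
end
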